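/- arXiv:2109.08658 — 8 statements merged into one kernel-verified Lean document; each statement's English description precedes it below -/
import Mathlib

section
/- Let E be a finite-dimensional real inner product space and let σ_1,…,σ_k ⊆ E be closed convex cones, each equal to the closure of its (nonempty) interior, whose union is all of E and whose interiors are pairwise disjoint. Let v_1,…,v_k ∈ E be points such that for each i, every w in the interior of σ_i, and every j ≠ i one has ⟨w, v_i⟩ > ⟨w, v_j⟩. Let P := convexHull{v_1,…,v_k}. Then: (1) the points v_1,…,v_k are pairwise distinct and the set of extreme points of P is exactly {v_1,…,v_k}; (2) for each i, σ_i = {w ∈ E : ⟨w, v_i⟩ ≥ ⟨w, p⟩ for all p ∈ P}. Moreover, if in addition each σ_i contains no line (σ_i ∩ (−σ_i) = {0}), then the affine span of P is all of E. -/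
open scoped InnerProductSpace Pointwise

/-- Lemma 2.9 ("main tool"): given a conic dissection `σ₁,…,σ_k` of a finite-dimensional real
inner product space `E` and points `v₁,…,v_k` such that each `v_i` strictly maximizes the
linear functional `⟨w, ·⟩` among the `v_j` for every `w` in the interior of `σ_i`, the `v_i`
are the extreme points of their convex hull `P`, each `σ_i` is the normal cone of `P` at `v_i`,
and if moreover each `σ_i` is pointed then `P` is full-dimensional. -/
theorem main_tool {E : Type*} [NormedAddCommGroup E] [InnerProductSpace ℝ E]
    [FiniteDimensional ℝ E] {k : ℕ} (σ : Fin k → Set E) (v : Fin k → E)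
    (hclosed : ∀ i, IsClosed (σ i))
    (hconv : ∀ i, Convex ℝ (σ i))
    (hadd : ∀ i, ∀ x ∈ σ i, ∀ y ∈ σ i, x + y ∈ σ i)
    (hsmul : ∀ i, ∀ c : ℝ, 0 ≤ c → ∀ x ∈ σ i, c • x ∈ σ i)
    (hreg : ∀ i, σ i = closure (interior (σ i)))
    (hne : ∀ i, (interior (σ i)).Nonempty)
    (hcover : (⋃ i, σ i) = Set.univ)
    (hdisj : ∀ i j, i ≠ j → Disjoint (interior (σ i)) (interior (σ j)))
    (hmax : ∀ i, ∀ w ∈ interior (σ i), ∀ j, j ≠ i → ⟪w, v j⟫_ℝ < ⟪w, v i⟫_ℝ) :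
    (Function.Injective v ∧
      Set.extremePoints ℝ (convexHull ℝ (Set.range v)) = Set.range v) ∧
    (∀ i, σ i = {w : E | ∀ p ∈ convexHull ℝ (Set.range v), ⟪w, p⟫_ℝ ≤ ⟪w, v i⟫_ℝ}) ∧
    ((∀ i, σ i ∩ -σ i = {0}) → affineSpan ℝ (convexHull ℝ (Set.range v)) = ⊤) := by
  classical
  have hk : Nonempty (Fin k) := by
    have h0 : (0 : E) ∈ ⋃ i, σ i := by rw [hcover]; trivial
    obtain ⟨_, ⟨i, rfl⟩, _⟩ := h0
    exact ⟨i⟩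
  set P : Set E := convexHull ℝ (Set.range v) with hP
  have hcont : ∀ y : E, Continuous fun x : E => ⟪x, y⟫_ℝ := fun y =>
    continuous_id.inner continuous_const
  -- every element of `σ i` weakly maximizes `⟪·, v i⟫` among the `v j`
  have hσM : ∀ i, ∀ w ∈ σ i, ∀ j, ⟪w, v j⟫_ℝ ≤ ⟪w, v i⟫_ℝ := by
    intro i w hw j
    rcases eq_or_ne j i with rfl | hji
    · exact le_rfl
    · have hC : IsClosed {x : E | ⟪x, v j⟫_ℝ ≤ ⟪x, v i⟫_ℝ} :=
        isClosed_le (hcont (v j)) (hcont (v i))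
    -- σ i = closure (interior (σ i)) ⊆ that closed set
      have hsub : σ i ⊆ {x : E | ⟪x, v j⟫_ℝ ≤ ⟪x, v i⟫_ℝ} := by
        rw [hreg i]
        exact closure_minimal (fun x hx => (hmax i x hx j hji).le) hC
      exact hsub hw
  -- strict maximizers lie in σ i
  have hUσ : ∀ i w, (∀ j, j ≠ i → ⟪w, v j⟫_ℝ < ⟪w, v i⟫_ℝ) → w ∈ σ i := by
    intro i w hw
    have hmem : w ∈ ⋃ j, σ j := by rw [hcover]; trivial
    obtain ⟨_, ⟨j, rfl⟩, hj⟩ := hmem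
    rcases eq_or_ne j i with rfl | hji
    · exact hj
    · exact absurd (hσM j w hj i) (not_le.mpr (hw j hji))
  -- weak maximizers lie in σ i
  have hMσ : ∀ i w, (∀ j, ⟪w, v j⟫_ℝ ≤ ⟪w, v i⟫_ℝ) → w ∈ σ i := by
    intro i w hw
    obtain ⟨u, hu⟩ := hne i
    have key : ∀ t : ℝ, 0 < t → t ≤ 1 → w + t • (u - w) ∈ σ i := by
      intro t ht ht1
      apply hUσ i
      intro j hji
      have h1 : ⟪w, v j⟫_ℝ ≤ ⟪w, v i⟫_ℝ := hw j
      have h2 : ⟪u, v j⟫_ℝ < ⟪u, v i⟫_ℝ := hmax i u hu j hji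
      have e : ∀ y : E, ⟪w + t • (u - w), y⟫_ℝ = (1 - t) * ⟪w, y⟫_ℝ + t * ⟪u, y⟫_ℝ := by
        intro y
        rw [inner_add_left, real_inner_smul_left, inner_sub_left]
        ring
      rw [e, e]
      have ha : (1 - t) * ⟪w, v j⟫_ℝ ≤ (1 - t) * ⟪w, v i⟫_ℝ :=
        mul_le_mul_of_nonneg_left h1 (by linarith)
      have hb : t * ⟪u, v j⟫_ℝ < t * ⟪u, v i⟫_ℝ := by
        exact mul_lt_mul_of_pos_left h2 ht
      linarith
    have hseq : Filter.Tendsto (fun n : ℕ => w + (1 / ((n : ℝ) + 1)) • (u - w))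
        Filter.atTop (nhds w) := by
      have h0 := tendsto_one_div_add_atTop_nhds_zero_nat (𝕜 := ℝ)
      have h1 : Filter.Tendsto (fun n : ℕ => w + (1 / ((n : ℝ) + 1)) • (u - w))
          Filter.atTop (nhds (w + (0 : ℝ) • (u - w))) :=
        tendsto_const_nhds.add (h0.smul tendsto_const_nhds)
      simpa using h1
    refine (hclosed i).mem_of_tendsto hseq (Filter.Eventually.of_forall fun n => ?_)
    refine key _ (by positivity) ?_
    rw [div_le_one (by positivity)]
    have : (0 : ℝ) ≤ (n : ℝ) := Nat.cast_nonneg n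
    linarith
  -- weak maximizers dominate over the whole hull
  have hMN : ∀ i w, (∀ j, ⟪w, v j⟫_ℝ ≤ ⟪w, v i⟫_ℝ) →
      ∀ p ∈ P, ⟪w, p⟫_ℝ ≤ ⟪w, v i⟫_ℝ := by
    intro i w hw
    have hlin : IsLinearMap ℝ fun p : E => ⟪w, p⟫_ℝ :=
      ⟨fun x y => inner_add_right w x y, fun c x => real_inner_smul_right w x c⟩
    have hconvH : Convex ℝ {p : E | ⟪w, p⟫_ℝ ≤ ⟪w, v i⟫_ℝ} :=
      convex_halfSpace_le hlin _
    intro p hp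
    exact convexHull_min (by rintro x ⟨j, rfl⟩; exact hw j) hconvH hp
  -- the face claim: strict maximizers expose the vertex v i
  have hface : ∀ i w, (∀ j, j ≠ i → ⟪w, v j⟫_ℝ < ⟪w, v i⟫_ℝ) →
      ∀ p ∈ P, ⟪w, v i⟫_ℝ ≤ ⟪w, p⟫_ℝ → p = v i := by
    intro i w hwi p hp hge
    obtain ⟨ι, _, t, z, ht0, ht1, hz, hzp⟩ := mem_convexHull_iff_exists_fintype.mp hp
    have hle' : ∀ a : ι, ⟪w, z a⟫_ℝ ≤ ⟪w, v i⟫_ℝ := by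
      intro a; obtain ⟨j, hj⟩ := hz a
      rcases eq_or_ne j i with rfl | hji
      · rw [← hj]
      · rw [← hj]; exact (hwi j hji).le
    have hip : ⟪w, p⟫_ℝ = ∑ a, t a * ⟪w, z a⟫_ℝ := by
      rw [← hzp, inner_sum]
      simp [real_inner_smul_right]
    have hsum : ∑ a, t a * (⟪w, v i⟫_ℝ - ⟪w, z a⟫_ℝ) = ⟪w, v i⟫_ℝ - ⟪w, p⟫_ℝ := by
      rw [hip]
      simp only [mul_sub]
      rw [Finset.sum_sub_distrib, ← Finset.sum_mul, ht1, one_mul]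
    have hnn : ∀ a ∈ Finset.univ (α := ι), 0 ≤ t a * (⟪w, v i⟫_ℝ - ⟪w, z a⟫_ℝ) :=
      fun a _ => mul_nonneg (ht0 a) (by linarith [hle' a])
    have hzero : ∀ a : ι, t a * (⟪w, v i⟫_ℝ - ⟪w, z a⟫_ℝ) = 0 := by
      have hsle : ∑ a, t a * (⟪w, v i⟫_ℝ - ⟪w, z a⟫_ℝ) ≤ 0 := by rw [hsum]; linarith
      have heq := le_antisymm hsle (Finset.sum_nonneg hnn)
      have := (Finset.sum_eq_zero_iff_of_nonneg hnn).mp heq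
      exact fun a => this a (Finset.mem_univ a)
    have hza : ∀ a : ι, t a • z a = t a • v i := by
      intro a
      rcases eq_or_ne (t a) 0 with h | h
      · simp [h]
      · have heq : ⟪w, v i⟫_ℝ - ⟪w, z a⟫_ℝ = 0 := by
          rcases mul_eq_zero.mp (hzero a) with h' | h'
          · exact absurd h' h
          · exact h'
        obtain ⟨j, hj⟩ := hz a
        rcases eq_or_ne j i with rfl | hji
        · rw [hj]
        · exfalso
          have := hwi j hji
          rw [hj] at this
          linarith
    calc p = ∑ a, t a • z a := hzp.symm
      _ = ∑ a, t a • v i := Finset.sum_congr rfl fun a _ => hza a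
      _ = (∑ a, t a) • v i := by rw [Finset.sum_smul]
      _ = v i := by rw [ht1, one_smul]
  have hvP : ∀ i, v i ∈ P := fun i => subset_convexHull ℝ _ (Set.mem_range_self i)
  -- injectivity
  have hinj : Function.Injective v := by
    intro i j hij
    by_contra hne'
    obtain ⟨w, hw⟩ := hne i
    have hlt := hmax i w hw j fun h => hne' h.symm
    rw [hij] at hlt
    exact lt_irrefl _ hlt
  -- extreme points
  have hext : Set.extremePoints ℝ P = Set.range v := by
    apply Set.Subset.antisymm extremePoints_convexHull_subset
    rintro _ ⟨i, rfl⟩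
    obtain ⟨w, hw⟩ := hne i
    have hwle : ∀ j, ⟪w, v j⟫_ℝ ≤ ⟪w, v i⟫_ℝ := by
      intro j
      rcases eq_or_ne j i with rfl | h
      · exact le_rfl
      · exact (hmax i w hw j h).le
    have hwlt : ∀ j, j ≠ i → ⟪w, v j⟫_ℝ < ⟪w, v i⟫_ℝ := hmax i w hw
    refine ⟨hvP i, ?_⟩
    intro x₁ hx₁ x₂ hx₂ hseg
    obtain ⟨a, b, ha, hb, hab, habx⟩ := hseg
    have e : ⟪w, v i⟫_ℝ = a * ⟪w, x₁⟫_ℝ + b * ⟪w, x₂⟫_ℝ := by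
      rw [← habx, inner_add_right, real_inner_smul_right, real_inner_smul_right]
    have h1 : ⟪w, x₁⟫_ℝ ≤ ⟪w, v i⟫_ℝ := hMN i w hwle x₁ hx₁
    have h2 : ⟪w, x₂⟫_ℝ ≤ ⟪w, v i⟫_ℝ := hMN i w hwle x₂ hx₂
    have e1 : ⟪w, v i⟫_ℝ ≤ ⟪w, x₁⟫_ℝ := by
      have hA : a * ⟪w, v i⟫_ℝ = ⟪w, v i⟫_ℝ - b * ⟪w, v i⟫_ℝ := by
        rw [show a = 1 - b by linarith]; ring
      have h : a * ⟪w, v i⟫_ℝ ≤ a * ⟪w, x₁⟫_ℝ := by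
        linarith [mul_le_mul_of_nonneg_left h2 hb.le]
      exact le_of_mul_le_mul_left h ha
    have e2 : ⟪w, v i⟫_ℝ ≤ ⟪w, x₂⟫_ℝ := by
      have hB : b * ⟪w, v i⟫_ℝ = ⟪w, v i⟫_ℝ - a * ⟪w, v i⟫_ℝ := by
        rw [show b = 1 - a by linarith]; ring
      have h : b * ⟪w, v i⟫_ℝ ≤ b * ⟪w, x₂⟫_ℝ := by
        linarith [mul_le_mul_of_nonneg_left h1 ha.le]
      exact le_of_mul_le_mul_left h hb
    exact hface i w hwlt x₁ hx₁ e1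
  refine ⟨⟨hinj, hext⟩, ?_, ?_⟩
  · -- part 2: σ i is the normal cone
    intro i
    apply Set.Subset.antisymm
    · intro w hw p hp
      exact hMN i w (hσM i w hw) p hp
    · intro w hw
      exact hMσ i w fun j => hw (v j) (hvP j)
  · -- part 3: full-dimensionality
    intro hpt
    rw [hP, affineSpan_convexHull]
    by_contra hne'
    obtain ⟨i0⟩ := hk
    have hns : (Set.range v).Nonempty := ⟨v i0, Set.mem_range_self i0⟩
    have hdir : vectorSpan ℝ (Set.range v) ≠ ⊤ := by
      intro h
      exact hne' ((AffineSubspace.affineSpan_eq_top_iff_vectorSpan_eq_top_of_nonempty ℝ E E hns).mpr h)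
    obtain ⟨w, hwmem, hw0⟩ :=
      (Submodule.ne_bot_iff _).mp fun h => hdir (Submodule.orthogonal_eq_bot_iff.mp h)
    have hconst : ∀ j, ⟪w, v j⟫_ℝ = ⟪w, v i0⟫_ℝ := by
      intro j
      have hm : v j - v i0 ∈ vectorSpan ℝ (Set.range v) := by
        have := vsub_mem_vectorSpan ℝ (Set.mem_range_self (f := v) j)
          (Set.mem_range_self (f := v) i0)
        simpa [vsub_eq_sub] using this
      have h0 : ⟪v j - v i0, w⟫_ℝ = 0 := (Submodule.mem_orthogonal _ w).mp hwmem _ hm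
      have h0' : ⟪w, v j - v i0⟫_ℝ = 0 := by rw [real_inner_comm]; exact h0
      rw [inner_sub_right] at h0'
      linarith
    have h1 : w ∈ σ i0 := hMσ i0 w fun j => (hconst j).le
    have h2 : -w ∈ σ i0 := hMσ i0 (-w) fun j => by
      rw [inner_neg_left, inner_neg_left]
      linarith [hconst j]
    have hmemboth : w ∈ σ i0 ∩ -σ i0 := ⟨h1, Set.mem_neg.mpr h2⟩
    rw [hpt i0] at hmemboth
    exact hw0 hmemboth
end

section
/- Let r and s be two preorders (reflexive and transitive binary relations) on [n] = {1,…,n}. If the cones {x ∈ ℝ^n : x_i ≥ 0 for all i, and x_i ≤ x_j whenever r(i,j)} and {x ∈ ℝ^n : x_i ≥ 0 for all i, and x_i ≤ x_j whenever s(i,j)} are equal as subsets of ℝ^n, then r = s. -/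
/-- The modified preorder cone `σ̃_r` associated to a binary relation `r` on `[n]`:
`σ̃_r = {x ∈ ℝ^n : x_i ≥ 0 for all i, and x_i ≤ x_j whenever r i j}`. -/
def tildeCone (n : ℕ) (r : Fin n → Fin n → Prop) : Set (Fin n → ℝ) :=
  {x | (∀ i, 0 ≤ x i) ∧ ∀ i j, r i j → x i ≤ x j}

/-- Lemma 4.17: the map `r ↦ σ̃_r` is injective on preorders on `[n]`. -/
theorem tildeCone_injective (n : ℕ) (r s : Fin n → Fin n → Prop)
    (hr_refl : Reflexive r) (hr_trans : Transitive r)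
    (hs_refl : Reflexive s) (hs_trans : Transitive s)
    (h : tildeCone n r = tildeCone n s) : r = s := by
  have key : ∀ (r s : Fin n → Fin n → Prop), Reflexive r → Transitive r →
      tildeCone n r ⊆ tildeCone n s → ∀ i j, s i j → r i j := by
    intro r s hrefl htrans hsub i j hsij
    by_contra hrij
    classical
    set x : Fin n → ℝ := fun k => if r k j then 0 else 1 with hxdef
    have hx : x ∈ tildeCone n r := by
      constructor
      · intro k
        simp only [hxdef]
        split <;> norm_num
      · intro k l hkl
        simp only [hxdef]
        by_cases hk : r k j
        · simp [hk]; split <;> norm_num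
        · have hl : ¬ r l j := fun hl => hk (htrans hkl hl)
          simp [hk, hl]
    have := (hsub hx).2 i j hsij
    simp [hxdef, hrij, hrefl j] at this
    linarith
  funext i j
  exact propext ⟨key s r hs_refl hs_trans h.ge i j, key r s hr_refl hr_trans h.le i j⟩
end

section
/- For every n ≥ 1 and every bijection π : [n] → [n], there exists a unique plane binary tree T with n internal nodes such that π is a linear extension of the partial order ≼_T, i.e., such that i ≼_T j implies π(i) ≤ π(j) for all i, j ∈ [n]. -/
/-- A plane binary tree: either a leaf or an ordered pair of plane binary trees. -/
inductive PBTree : Type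
  | leaf : PBTree
  | node : PBTree → PBTree → PBTree
  deriving DecidableEq

namespace PBTree

/-- The number of internal nodes of a plane binary tree. -/
def nodes : PBTree → ℕ
  | leaf => 0
  | node l r => nodes l + nodes r + 1

/-- `anc T i j` means that the internal node of `T` with in-order (1-based) label `j`
lies on the path from the internal node labeled `i` to the root (inclusive);
this is the relation `i ≼_T j`. -/
def anc : PBTree → ℕ → ℕ → Prop
  | leaf, _, _ => False
  | node l r, i, j =>
      (j = nodes l + 1 ∧ 1 ≤ i ∧ i ≤ nodes l + nodes r + 1)
      ∨ anc l i j
      ∨ anc r (i - (nodes l + 1)) (j - (nodes l + 1))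

/-- The in-order label of the root of a plane binary tree (`0` for a leaf). -/
def rootLabel : PBTree → ℕ
  | leaf => 0
  | node l _ => nodes l + 1

/-- `childOf T i j` : the internal node of `T` labeled `i` is a child of the internal
node labeled `j` (labels are 1-based, in in-order). -/
def childOf : PBTree → ℕ → ℕ → Prop
  | leaf, _, _ => False
  | node l r, i, j =>
      (j = nodes l + 1 ∧
        ((l ≠ leaf ∧ i = rootLabel l) ∨ (r ≠ leaf ∧ i = nodes l + 1 + rootLabel r)))
      ∨ childOf l i j
      ∨ childOf r (i - (nodes l + 1)) (j - (nodes l + 1))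

/-- The subtree of `T` rooted at the internal node with (1-based, in-order) label `i`
(the result is a leaf if `i` is out of range). -/
def subtreeAt : PBTree → ℕ → PBTree
  | leaf, _ => leaf
  | node l r, i =>
      if i = nodes l + 1 then node l r
      else if i ≤ nodes l then subtreeAt l i
      else subtreeAt r (i - (nodes l + 1))

/-- `val α S := Σ_{k=1}^{t} α_k − Σ_{k=1}^{a} α_k − Σ_{k=1}^{b} α_k` where `t`, `a`, `b` are
the numbers of internal nodes of `S`, of its left subtree and of its right subtree. -/
def val (α : ℕ → ℝ) : PBTree → ℝ
  | leaf => 0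
  | node l r =>
      (∑ k ∈ Finset.Icc 1 (nodes l + nodes r + 1), α k)
        - (∑ k ∈ Finset.Icc 1 (nodes l), α k) - (∑ k ∈ Finset.Icc 1 (nodes r), α k)

end PBTree


namespace PBTree

/-! ### Auxiliary machinery -/

/-- maximum of a list of naturals -/
def mx : List ℕ → ℕ
  | [] => 0
  | a :: t => max a (mx t)

lemma mx_mem : ∀ {w : List ℕ}, w ≠ [] → mx w ∈ w := by
  intro w h
  induction w with
  | nil => simp at h
  | cons a t ih =>
    by_cases ht : t = []
    · subst ht; simp [mx]
    · rcases le_total a (mx t) with h1 | h1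
      · simp [mx, max_eq_right h1, ih ht]
      · simp [mx, max_eq_left h1]

lemma le_mx : ∀ {w : List ℕ} {x : ℕ}, x ∈ w → x ≤ mx w := by
  intro w x h
  induction w with
  | nil => simp at h
  | cons a t ih =>
    rcases List.mem_cons.1 h with rfl | h
    · simp [mx]
    · exact le_trans (ih h) (le_max_right _ _)

lemma getD_take (w : List ℕ) (k i : ℕ) (h : i < k) :
    (w.take k).getD i 0 = w.getD i 0 := by
  simp [List.getD_eq_getElem?_getD, List.getElem?_take, h]

lemma getD_drop (w : List ℕ) (k i : ℕ) :
    (w.drop k).getD i 0 = w.getD (k + i) 0 := by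
  simp [List.getD_eq_getElem?_getD, List.getElem?_drop]

/-- Build the unique compatible tree: root at the (first) index of the maximum. -/
def build (w : List ℕ) : PBTree :=
  if h : w = [] then leaf
  else
    node (build (w.take (w.idxOf (mx w)))) (build (w.drop (w.idxOf (mx w) + 1)))
termination_by w.length
decreasing_by
  all_goals
    have hk : w.idxOf (mx w) < w.length := List.idxOf_lt_length_iff.2 (mx_mem h)
    have hl : 0 < w.length := List.length_pos_iff.2 h
    simp only [List.length_take, List.length_drop]
    omega

lemma nodes_build (w : List ℕ) : (build w).nodes = w.length := by
  generalize hn : w.length = n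
  induction n using Nat.strong_induction_on generalizing w with
  | _ n ih =>
    subst hn
    rw [build]
    split
    · rename_i h; subst h; simp_all [nodes]
    · rename_i h
      have hk : w.idxOf (mx w) < w.length := List.idxOf_lt_length_iff.2 (mx_mem h)
      have h1 : (w.take (w.idxOf (mx w))).length = w.idxOf (mx w) := by
        simp [List.length_take]; omega
      have h2 : (w.drop (w.idxOf (mx w) + 1)).length
          = w.length - (w.idxOf (mx w) + 1) := by simp
      rw [nodes, ih _ (by omega) _ h1, ih _ (by omega) _ h2]
      omega

lemma anc_bounds : ∀ (T : PBTree) (i j : ℕ), anc T i j →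
    1 ≤ i ∧ i ≤ T.nodes ∧ 1 ≤ j ∧ j ≤ T.nodes
  | leaf, _, _, h => h.elim
  | node l r, i, j, h => by
    rcases h with ⟨hj, hi1, hi2⟩ | h | h
    · simp only [nodes]; omega
    · have := anc_bounds l i j h; simp only [nodes]; omega
    · have := anc_bounds r _ _ h; simp only [nodes]; omega

lemma build_spec : ∀ (w : List ℕ) (i j : ℕ), (build w).anc i j →
    w.getD (i - 1) 0 ≤ w.getD (j - 1) 0 := by
  intro w
  generalize hn : w.length = n
  induction n using Nat.strong_induction_on generalizing w with
  | _ n ih =>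
    subst hn
    intro i j h
    rw [build] at h
    split at h
    · exact h.elim
    · rename_i hne
      set k := w.idxOf (mx w) with hkdef
      have hkl : k < w.length := List.idxOf_lt_length_iff.2 (mx_mem hne)
      have htl : (w.take k).length = k := by simp [List.length_take]; omega
      have hdl : (w.drop (k + 1)).length = w.length - (k + 1) := by simp
      have hLn : (build (w.take k)).nodes = k := by rw [nodes_build, htl]
      have hRn : (build (w.drop (k + 1))).nodes = w.length - (k + 1) := by
        rw [nodes_build, hdl]
      have hwk : w.getD k 0 = mx w := by
        rw [List.getD_eq_getElem?_getD, List.getElem?_eq_getElem hkl]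
        have : w.get ⟨k, hkl⟩ = mx w := List.idxOf_get hkl
        simpa using this
      rcases h with ⟨hj, hi1, hi2⟩ | h | h
      · have hj1 : j - 1 = k := by omega
        have hi1' : i - 1 < w.length := by omega
        rw [hj1, hwk]
        have : w.getD (i - 1) 0 = w[i - 1] := by
          rw [List.getD_eq_getElem?_getD, List.getElem?_eq_getElem hi1']; rfl
        rw [this]
        exact le_mx (List.getElem_mem _)
      · have hb := anc_bounds _ _ _ h
        rw [hLn] at hb
        have := ih _ (by omega) _ htl i j h
        rwa [getD_take _ _ _ (by omega), getD_take _ _ _ (by omega)] at this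
      · rw [hLn] at h
        have hb := anc_bounds _ _ _ h
        rw [hRn] at hb
        have := ih _ (by omega) _ hdl _ _ h
        rw [getD_drop, getD_drop] at this
        have e1 : k + 1 + (i - (k + 1) - 1) = i - 1 := by omega
        have e2 : k + 1 + (j - (k + 1) - 1) = j - 1 := by omega
        rwa [e1, e2] at this

lemma build_uniq : ∀ (w : List ℕ), w.Nodup → ∀ T : PBTree, T.nodes = w.length →
    (∀ i j, T.anc i j → w.getD (i - 1) 0 ≤ w.getD (j - 1) 0) → T = build w := by
  intro w
  generalize hn : w.length = n
  induction n using Nat.strong_induction_on generalizing w with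
  | _ n ih =>
    subst hn
    intro hnd T hT hP
    rw [build]
    split
    · rename_i h; subst h
      cases T with
      | leaf => rfl
      | node l r => simp [nodes] at hT
    · rename_i hne
      cases T with
      | leaf =>
        exfalso
        simp only [nodes] at hT
        exact hne (List.length_eq_zero_iff.1 hT.symm)
      | node l r =>
        set k := w.idxOf (mx w) with hkdef
        have hkl : k < w.length := List.idxOf_lt_length_iff.2 (mx_mem hne)
        simp only [nodes] at hT
        have hnl : l.nodes < w.length := by omega
        have hroot : ∀ m, m < w.length → w.getD m 0 ≤ w.getD l.nodes 0 := by
          intro m hm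
          have := hP (m + 1) (l.nodes + 1)
            (Or.inl ⟨rfl, by omega, by omega⟩)
          simpa using this
        have hwl : w.getD l.nodes 0 = w[l.nodes] := by
          rw [List.getD_eq_getElem?_getD, List.getElem?_eq_getElem hnl]; rfl
        have hmax : w[l.nodes] = mx w := by
          apply le_antisymm (le_mx (List.getElem_mem _))
          obtain ⟨m, hm, hmx⟩ := List.getElem_of_mem (mx_mem hne)
          rw [← hmx, ← hwl]
          have := hroot m hm
          rwa [List.getD_eq_getElem?_getD, List.getElem?_eq_getElem hm] at this
        have hlk : l.nodes = k := by
          have h1 := List.Nodup.idxOf_getElem hnd l.nodes hnl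
          rw [hmax] at h1
          exact h1.symm
        have htl : (w.take k).length = k := by simp [List.length_take]; omega
        have hdl : (w.drop (k + 1)).length = w.length - (k + 1) := by simp
        have hL : l = build (w.take k) := by
          refine ih _ (by omega) _ htl ((List.take_sublist _ _).nodup hnd) l
            hlk ?_
          intro i j h
          have hb := anc_bounds _ _ _ h
          have := hP i j (Or.inr (Or.inl h))
          rwa [← getD_take w k (i-1) (by omega), ← getD_take w k (j-1) (by omega)]
            at this
        have hR : r = build (w.drop (k + 1)) := by
          refine ih _ (by omega) _ hdl
            ((List.drop_sublist _ _).nodup hnd) r (by omega) ?_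
          intro i j h
          have hb := anc_bounds _ _ _ h
          have h' : anc (node l r) (i + (l.nodes + 1)) (j + (l.nodes + 1)) :=
            Or.inr (Or.inr (by simpa using h))
          have := hP _ _ h'
          rw [getD_drop, getD_drop]
          have e1 : k + 1 + (i - 1) = i + (l.nodes + 1) - 1 := by omega
          have e2 : k + 1 + (j - 1) = j + (l.nodes + 1) - 1 := by omega
          rwa [e1, e2]
        rw [hL, hR]

end PBTree

/-- The vector `v_T^α ∈ ℝ^n`: its coordinate of (0-based) index `i` is
`val(α, T_(i+1))`, the value of the subtree rooted at the internal node labeled `i+1`. -/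
def lodayVec (n : ℕ) (α : ℕ → ℝ) (T : PBTree) : Fin n → ℝ :=
  fun i => PBTree.val α (T.subtreeAt (i.1 + 1))

/-- Lemma 3.15: for every `n ≥ 1` and every permutation `π` of `[n]`, there is a unique
plane binary tree `T` with `n` internal nodes such that `π` is a linear extension of `≼_T`,
i.e. `i ≼_T j → π i ≤ π j`. -/
theorem unique_tree_of_perm (n : ℕ) (hn : 1 ≤ n) (π : Equiv.Perm (Fin n)) :
    ∃! T : PBTree, T.nodes = n ∧
      ∀ i j : Fin n, T.anc (i.1 + 1) (j.1 + 1) → π i ≤ π j := by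
  classical
  set w : List ℕ := List.ofFn (fun i : Fin n => (π i : ℕ)) with hwdef
  have hlen : w.length = n := by simp [hwdef]
  have hnd : w.Nodup := by
    rw [hwdef, List.nodup_ofFn]
    exact fun a b hab => π.injective (Fin.val_injective hab)
  have hget : ∀ i : Fin n, w.getD i.1 0 = (π i : ℕ) := by
    intro i
    have hi : i.1 < w.length := by rw [hlen]; exact i.isLt
    rw [List.getD_eq_getElem?_getD, List.getElem?_eq_getElem hi]
    simp [hwdef]
  refine ⟨PBTree.build w, ⟨by rw [PBTree.nodes_build, hlen], ?_⟩, ?_⟩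
  · intro i j h
    have := PBTree.build_spec w (i.1 + 1) (j.1 + 1) h
    simp only [Nat.add_sub_cancel] at this
    rw [hget i, hget j] at this
    exact this
  · rintro T ⟨hTn, hTP⟩
    refine PBTree.build_uniq w hnd T (by rw [hTn, hlen]) ?_
    intro i j h
    have hb := PBTree.anc_bounds _ _ _ h
    rw [hTn] at hb
    have hi : i - 1 < n := by omega
    have hj : j - 1 < n := by omega
    have hi' : (⟨i - 1, hi⟩ : Fin n).1 + 1 = i := by simp; omega
    have hj' : (⟨j - 1, hj⟩ : Fin n).1 + 1 = j := by simp; omega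
    have := hTP ⟨i - 1, hi⟩ ⟨j - 1, hj⟩ (by rw [hi', hj']; exact h)
    rw [hget ⟨i - 1, hi⟩, hget ⟨j - 1, hj⟩]
    exact this
end

section
/- Let α ∈ ℝ^n be strictly increasing and let T and T' be plane binary trees, each with n internal nodes. Then for every w ∈ ℝ^n satisfying w_i < w_j whenever the internal node labeled i is a child of the internal node labeled j in T, one has ⟨w, v_T^α⟩ ≥ ⟨w, v_{T'}^α⟩, with equality if and only if T = T'. -/
section Aux

open PBTree Finset

variable {α : ℕ → ℝ}

lemma sum_Ioc_shift (f : ℕ → ℝ) (c a : ℕ) :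
    ∀ m, ∑ i ∈ Finset.Ioc (c + a) (c + a + m), f i = ∑ j ∈ Finset.Ioc a (a + m), f (c + j)
  | 0 => by simp
  | (m + 1) => by
      rw [show c + a + (m + 1) = (c + a + m) + 1 by omega,
        Finset.sum_Ioc_succ_top (by omega) f,
        show a + (m + 1) = (a + m) + 1 by omega,
        Finset.sum_Ioc_succ_top (by omega), sum_Ioc_shift f c a m]
      congr 2
      omega

lemma sum_Ioc_shift0 (f : ℕ → ℝ) (c m : ℕ) :
    ∑ i ∈ Finset.Ioc c (c + m), f i = ∑ j ∈ Finset.Ioc 0 m, f (c + j) := by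
  have h := sum_Ioc_shift f c 0 m
  simpa using h

lemma Icc_one (m : ℕ) : Finset.Icc 1 m = Finset.Ioc 0 m := by
  ext k; simp [Finset.mem_Icc, Finset.mem_Ioc]; omega

/-- `Asum α m = α 1 + ⋯ + α m`. -/
def Asum (α : ℕ → ℝ) (m : ℕ) : ℝ := ∑ k ∈ Finset.Ioc 0 m, α k

lemma val_node (l r : PBTree) :
    val α (node l r) = Asum α (l.nodes + r.nodes + 1) - Asum α l.nodes - Asum α r.nodes := by
  simp [PBTree.val, Asum, Icc_one]

lemma subtreeAt_left (l r : PBTree) {i : ℕ} (h : i ≤ l.nodes) :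
    (node l r).subtreeAt i = l.subtreeAt i := by
  rw [subtreeAt, if_neg (by omega), if_pos h]

lemma subtreeAt_right (l r : PBTree) {i : ℕ} (h : l.nodes + 1 < i) :
    (node l r).subtreeAt i = r.subtreeAt (i - (l.nodes + 1)) := by
  rw [subtreeAt, if_neg (by omega), if_neg (by omega)]

lemma subtreeAt_root (l r : PBTree) : (node l r).subtreeAt (l.nodes + 1) = node l r := by
  rw [subtreeAt, if_pos rfl]

lemma sum_split3 (f : ℕ → ℝ) {a b c : ℕ} (h1 : a ≤ b) (h2 : b + 1 ≤ c) :
    ∑ i ∈ Finset.Ioc a c, f i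
      = (∑ i ∈ Finset.Ioc a b, f i) + f (b + 1) + ∑ i ∈ Finset.Ioc (b + 1) c, f i := by
  rw [← Finset.sum_Ioc_consecutive f (show a ≤ b + 1 by omega) h2,
    ← Finset.sum_Ioc_succ_top h1]

/-- Interval sum of subtree values. -/
def SS (α : ℕ → ℝ) (T : PBTree) (a m : ℕ) : ℝ :=
  ∑ i ∈ Finset.Ioc a (a + m), val α (T.subtreeAt i)

lemma SS_zero (T : PBTree) (a : ℕ) : SS α T a 0 = 0 := by simp [SS]

lemma SS_split (l r : PBTree) {a m : ℕ} (ha : a ≤ l.nodes) (hm : l.nodes + 1 ≤ a + m) :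
    SS α (node l r) a m
      = SS α l a (l.nodes - a) + val α (node l r) + SS α r 0 (a + m - (l.nodes + 1)) := by
  unfold SS
  rw [sum_split3 _ ha hm]
  congr 1
  · congr 1
    · rw [show a + (l.nodes - a) = l.nodes by omega]
      refine Finset.sum_congr rfl fun i hi => ?_
      simp only [Finset.mem_Ioc] at hi
      rw [subtreeAt_left l r (by omega)]
    · rw [subtreeAt_root]
  · set q := a + m - (l.nodes + 1) with hq
    rw [show a + m = (l.nodes + 1) + q by omega, sum_Ioc_shift0, show 0 + q = q by omega]
    refine Finset.sum_congr rfl fun j hj => ?_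
    simp only [Finset.mem_Ioc] at hj
    rw [subtreeAt_right l r (by omega), show l.nodes + 1 + j - (l.nodes + 1) = j by omega]

lemma SS_total : ∀ T : PBTree, SS α T 0 T.nodes = Asum α T.nodes
  | leaf => by simp [SS, Asum, nodes]
  | node l r => by
      rw [show (node l r).nodes = l.nodes + r.nodes + 1 from rfl,
        SS_split l r (by omega) (by omega),
        show l.nodes - 0 = l.nodes by omega,
        show 0 + (l.nodes + r.nodes + 1) - (l.nodes + 1) = r.nodes by omega,
        SS_total l, SS_total r, val_node]
      ring

lemma Asum_diff {p m : ℕ} (h : p ≤ m) :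
    Asum α m - Asum α p = ∑ k ∈ Finset.Ioc p m, α k := by
  unfold Asum
  rw [← Finset.sum_Ioc_consecutive α (Nat.zero_le p) h]
  ring

/-- `(a, a+m]` is the label interval of a subtree of `T` (or is empty). -/
def ivl : PBTree → ℕ → ℕ → Prop
  | PBTree.leaf, _, m => m = 0
  | PBTree.node l r, a, m =>
      m = 0 ∨ (a = 0 ∧ m = nodes l + nodes r + 1)
        ∨ (a + m ≤ nodes l ∧ ivl l a m)
        ∨ (nodes l + 1 ≤ a ∧ ivl r (a - (nodes l + 1)) m)

lemma ivl_zero : ∀ (T : PBTree) (a : ℕ), ivl T a 0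
  | PBTree.leaf, _ => rfl
  | PBTree.node _ _, _ => Or.inl rfl

lemma ivl_self : ∀ T : PBTree, ivl T 0 T.nodes
  | PBTree.leaf => rfl
  | PBTree.node l r => Or.inr (Or.inl ⟨rfl, rfl⟩)


lemma shifted_le (n : ℕ) (α : ℕ → ℝ) (hα : ∀ i j : ℕ, 1 ≤ i → i < j → j ≤ n → α i < α j)
    {p m c : ℕ} (hc : 1 ≤ c) (hmn : m + c ≤ n) :
    (∑ k ∈ Finset.Ioc p m, α k ≤ ∑ k ∈ Finset.Ioc p m, α (c + k)) ∧
      (p < m → ∑ k ∈ Finset.Ioc p m, α k < ∑ k ∈ Finset.Ioc p m, α (c + k)) := by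
  constructor
  · refine Finset.sum_le_sum fun k hk => ?_
    simp only [Finset.mem_Ioc] at hk
    exact le_of_lt (hα k (c + k) (by omega) (by omega) (by omega))
  · intro hlt
    refine Finset.sum_lt_sum_of_nonempty ⟨m, ?_⟩ fun k hk => ?_
    · simp only [Finset.mem_Ioc]; omega
    · simp only [Finset.mem_Ioc] at hk
      exact hα k (c + k) (by omega) (by omega) (by omega)

lemma key (n : ℕ) (α : ℕ → ℝ) (hα : ∀ i j : ℕ, 1 ≤ i → i < j → j ≤ n → α i < α j) :
    ∀ T' : PBTree, T'.nodes ≤ n → ∀ a m : ℕ, a + m ≤ T'.nodes →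
      Asum α m ≤ SS α T' a m ∧ (SS α T' a m = Asum α m ↔ ivl T' a m)
  | PBTree.leaf, hn, a, m, ham => by
      have hm : m = 0 := by simp [nodes] at ham; omega
      subst hm
      simp [SS, Asum, ivl]
  | PBTree.node l r, hn, a, m, ham => by
      have hN : (node l r).nodes = l.nodes + r.nodes + 1 := rfl
      rw [hN] at ham
      have hnl : l.nodes ≤ n := by
        refine le_trans ?_ hn; rw [hN]; omega
      have hnr : r.nodes ≤ n := by
        refine le_trans ?_ hn; rw [hN]; omega
      rw [hN] at hn
      by_cases h1 : a + m ≤ l.nodes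
      · have hSS : SS α (node l r) a m = SS α l a m := by
          unfold SS
          refine Finset.sum_congr rfl fun i hi => ?_
          simp only [Finset.mem_Ioc] at hi
          rw [subtreeAt_left l r (by omega)]
        have IH := key n α hα l hnl a m h1
        have hiv : ivl (node l r) a m ↔ ivl l a m := by
          simp only [ivl]
          constructor
          · rintro (h0 | ⟨ha0, hm0⟩ | ⟨_, h⟩ | ⟨hge, _⟩)
            · exact h0 ▸ ivl_zero l a
            · omega
            · exact h
            · omega
          · intro h; exact Or.inr (Or.inr (Or.inl ⟨h1, h⟩))
        rw [hSS]
        exact ⟨IH.1, IH.2.trans hiv.symm⟩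
      · by_cases h2 : l.nodes + 1 ≤ a
        · have hSS : SS α (node l r) a m = SS α r (a - (l.nodes + 1)) m := by
            unfold SS
            set a' := a - (l.nodes + 1) with ha'
            rw [show a = l.nodes + 1 + a' by omega, sum_Ioc_shift]
            refine Finset.sum_congr rfl fun j hj => ?_
            simp only [Finset.mem_Ioc] at hj
            rw [subtreeAt_right l r (by omega),
              show l.nodes + 1 + j - (l.nodes + 1) = j by omega]
          have IH := key n α hα r hnr (a - (l.nodes + 1)) m (by omega)
          have hiv : ivl (node l r) a m ↔ ivl r (a - (l.nodes + 1)) m := by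
            simp only [ivl]
            constructor
            · rintro (h0 | ⟨ha0, hm0⟩ | ⟨hle, _⟩ | ⟨_, h⟩)
              · exact h0 ▸ ivl_zero r _
              · omega
              · omega
              · exact h
            · intro h; exact Or.inr (Or.inr (Or.inr ⟨h2, h⟩))
          rw [hSS]
          exact ⟨IH.1, IH.2.trans hiv.symm⟩
        · -- middle case: a ≤ l.nodes < a + m
          set p := l.nodes - a with hp
          set q := a + m - (l.nodes + 1) with hq
          have hsplit : SS α (node l r) a m
              = SS α l a p + PBTree.val α (node l r) + SS α r 0 q :=
            SS_split l r (by omega) (by omega)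
          have IHl := key n α hα l hnl a p (by omega)
          have IHr := key n α hα r hnr 0 q (by omega)
          have hm' : m = p + q + 1 := by omega
          have d1 : Asum α l.nodes - Asum α p = ∑ k ∈ Finset.Ioc p l.nodes, α k :=
            Asum_diff (by omega)
          have d2 : Asum α r.nodes - Asum α q = ∑ k ∈ Finset.Ioc q r.nodes, α k :=
            Asum_diff (by omega)
          have d3 : Asum α (l.nodes + r.nodes + 1) - Asum α (p + q + 1)
              = ∑ k ∈ Finset.Ioc (p + q + 1) (l.nodes + r.nodes + 1), α k :=
            Asum_diff (by omega)
          have dsplit : ∑ k ∈ Finset.Ioc (p + q + 1) (l.nodes + r.nodes + 1), α k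
              = (∑ k ∈ Finset.Ioc (p + q + 1) (l.nodes + q + 1), α k)
                + ∑ k ∈ Finset.Ioc (l.nodes + q + 1) (l.nodes + r.nodes + 1), α k :=
            (Finset.sum_Ioc_consecutive α (by omega) (by omega)).symm
          have s1 : ∑ k ∈ Finset.Ioc (p + q + 1) (l.nodes + q + 1), α k
              = ∑ k ∈ Finset.Ioc p l.nodes, α (q + 1 + k) := by
            have h := sum_Ioc_shift α (q + 1) p (l.nodes - p)
            rw [show p + q + 1 = q + 1 + p by omega,
              show l.nodes + q + 1 = q + 1 + p + (l.nodes - p) by omega, h,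
              show p + (l.nodes - p) = l.nodes by omega]
          have s2 : ∑ k ∈ Finset.Ioc (l.nodes + q + 1) (l.nodes + r.nodes + 1), α k
              = ∑ k ∈ Finset.Ioc q r.nodes, α (l.nodes + 1 + k) := by
            have h := sum_Ioc_shift α (l.nodes + 1) q (r.nodes - q)
            rw [show l.nodes + q + 1 = l.nodes + 1 + q by omega,
              show l.nodes + r.nodes + 1 = l.nodes + 1 + q + (r.nodes - q) by omega, h,
              show q + (r.nodes - q) = r.nodes by omega]
          have le1 := shifted_le n α hα (p := p) (m := l.nodes) (c := q + 1)
            (by omega) (by omega)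
          have le2 := shifted_le n α hα (p := q) (m := r.nodes) (c := l.nodes + 1)
            (by omega) (by omega)
          have hval : PBTree.val α (node l r)
              = Asum α (l.nodes + r.nodes + 1) - Asum α l.nodes - Asum α r.nodes :=
            val_node l r
          have hArith : Asum α m + (Asum α l.nodes - Asum α p) + (Asum α r.nodes - Asum α q)
              ≤ Asum α (l.nodes + r.nodes + 1) := by
            rw [hm']
            linarith [le1.1, le2.1]
          constructor
          · linarith [IHl.1, IHr.1]
          · have hivl : ivl (node l r) a m ↔ (a = 0 ∧ m = l.nodes + r.nodes + 1) := by
              simp only [ivl]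
              constructor
              · rintro (h0 | h | ⟨hle, _⟩ | ⟨hge, _⟩)
                · omega
                · exact h
                · omega
                · omega
              · intro h; exact Or.inr (Or.inl h)
            rw [hivl]
            constructor
            · intro heq
              have z1 : SS α l a p = Asum α p := by linarith [IHl.1, IHr.1]
              have z2 : SS α r 0 q = Asum α q := by linarith [IHl.1, IHr.1]
              have zar : (∑ k ∈ Finset.Ioc p l.nodes, α k)
                  + (∑ k ∈ Finset.Ioc q r.nodes, α k)
                  = (∑ k ∈ Finset.Ioc p l.nodes, α (q + 1 + k))
                    + ∑ k ∈ Finset.Ioc q r.nodes, α (l.nodes + 1 + k) := by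
                have hAm : Asum α m = Asum α (p + q + 1) := by rw [hm']
                linarith
              have hpl : p = l.nodes := by
                by_contra hne
                have := le1.2 (by omega)
                linarith [le2.1]
              have hqr : q = r.nodes := by
                by_contra hne
                have := le2.2 (by omega)
                linarith [le1.1]
              omega
            · rintro ⟨ha0, hmn'⟩
              have hpl : p = l.nodes := by omega
              have hqr : q = r.nodes := by omega
              have t1 : SS α l a p = Asum α p := by
                rw [ha0, hpl, SS_total l]
              have t2 : SS α r 0 q = Asum α q := by
                rw [hqr, SS_total r]
              rw [hsplit, t1, t2, hval, hmn', hpl, hqr]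
              ring


/-- Edge sum: `Σ_{child c of T} (W(c) - W(parent c)) * (Σ_{i ∈ interval(c)} v i)`,
    with everything shifted by the offset `a`. -/
def esum (W v : ℕ → ℝ) : PBTree → ℕ → ℝ
  | PBTree.leaf, _ => 0
  | PBTree.node l r, a =>
      (W (a + l.rootLabel) - W (a + l.nodes + 1))
          * (∑ i ∈ Finset.Ioc a (a + l.nodes), v i)
        + esum W v l a
        + (W (a + l.nodes + 1 + r.rootLabel) - W (a + l.nodes + 1))
          * (∑ i ∈ Finset.Ioc (a + l.nodes + 1) (a + l.nodes + 1 + r.nodes), v i)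
        + esum W v r (a + l.nodes + 1)

/-- The value of `esum` when `v` is the own subtree-value vector of the tree. -/
def eA (α W : ℕ → ℝ) : PBTree → ℕ → ℝ
  | PBTree.leaf, _ => 0
  | PBTree.node l r, a =>
      (W (a + l.rootLabel) - W (a + l.nodes + 1)) * Asum α l.nodes
        + eA α W l a
        + (W (a + l.nodes + 1 + r.rootLabel) - W (a + l.nodes + 1)) * Asum α r.nodes
        + eA α W r (a + l.nodes + 1)

lemma esum_congr (W : ℕ → ℝ) :
    ∀ (T : PBTree) (a : ℕ) (v v' : ℕ → ℝ),
      (∀ i ∈ Finset.Ioc a (a + T.nodes), v i = v' i) → esum W v T a = esum W v' T a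
  | PBTree.leaf, _, _, _, _ => rfl
  | PBTree.node l r, a, v, v', h => by
      have hN : (node l r).nodes = l.nodes + r.nodes + 1 := rfl
      rw [hN] at h
      rw [esum, esum]
      rw [esum_congr W l a v v' fun i hi => by
            refine h i ?_; simp only [Finset.mem_Ioc] at *; omega,
        esum_congr W r (a + l.nodes + 1) v v' fun i hi => by
            refine h i ?_; simp only [Finset.mem_Ioc] at *; omega,
        Finset.sum_congr rfl fun i hi => by
            refine h i ?_; simp only [Finset.mem_Ioc] at *; omega,
        Finset.sum_congr rfl (fun i hi => by
            refine h i ?_; simp only [Finset.mem_Ioc] at *; omega :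
          ∀ i ∈ Finset.Ioc (a + l.nodes + 1) (a + l.nodes + 1 + r.nodes), v i = v' i)]

/-- Decomposition of a weighted sum along the tree structure. -/
lemma Dsum (W v : ℕ → ℝ) :
    ∀ (T : PBTree) (a : ℕ),
      ∑ i ∈ Finset.Ioc a (a + T.nodes), W i * v i
        = W (a + T.rootLabel) * (∑ i ∈ Finset.Ioc a (a + T.nodes), v i) + esum W v T a
  | PBTree.leaf, a => by simp [esum, nodes, rootLabel]
  | PBTree.node l r, a => by
      have hN : (node l r).nodes = l.nodes + r.nodes + 1 := rfl
      have hsplitW := sum_split3 (fun i => W i * v i)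
        (a := a) (b := a + l.nodes) (c := a + (node l r).nodes)
        (by omega) (by rw [hN]; omega)
      have hsplitv := sum_split3 v (a := a) (b := a + l.nodes) (c := a + (node l r).nodes)
        (by omega) (by rw [hN]; omega)
      have e1 : Finset.Ioc (a + l.nodes + 1) (a + (node l r).nodes)
          = Finset.Ioc (a + l.nodes + 1) (a + l.nodes + 1 + r.nodes) := by
        rw [hN]; congr 1; omega
      rw [hsplitW, hsplitv, e1] at *
      rw [Dsum W v l a, Dsum W v r (a + l.nodes + 1)]
      rw [esum]
      have hroot : (node l r).rootLabel = l.nodes + 1 := rfl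
      rw [hroot, show a + (l.nodes + 1) = a + l.nodes + 1 by omega]
      ring

/-- `esum` of a tree against its own subtree-value vector equals `eA`. -/
lemma esum_val (W : ℕ → ℝ) :
    ∀ (T : PBTree) (a : ℕ),
      esum W (fun i => PBTree.val α (T.subtreeAt (i - a))) T a = eA α W T a
  | PBTree.leaf, a => rfl
  | PBTree.node l r, a => by
      rw [esum, eA]
      have hsum1 : ∑ i ∈ Finset.Ioc a (a + l.nodes),
          PBTree.val α ((node l r).subtreeAt (i - a)) = Asum α l.nodes := by
        rw [sum_Ioc_shift0]
        rw [← SS_total (α := α) l]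
        unfold SS
        rw [show (0 : ℕ) + l.nodes = l.nodes by omega]
        refine Finset.sum_congr rfl fun j hj => ?_
        simp only [Finset.mem_Ioc] at hj
        rw [show a + j - a = j by omega, subtreeAt_left l r (by omega)]
      have hsum2 : ∑ i ∈ Finset.Ioc (a + l.nodes + 1) (a + l.nodes + 1 + r.nodes),
          PBTree.val α ((node l r).subtreeAt (i - a)) = Asum α r.nodes := by
        rw [sum_Ioc_shift0]
        rw [← SS_total (α := α) r]
        unfold SS
        rw [show (0 : ℕ) + r.nodes = r.nodes by omega]
        refine Finset.sum_congr rfl fun j hj => ?_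
        simp only [Finset.mem_Ioc] at hj
        rw [show a + l.nodes + 1 + j - a = l.nodes + 1 + j by omega,
          subtreeAt_right l r (by omega),
          show l.nodes + 1 + j - (l.nodes + 1) = j by omega]
      have hrec1 : esum W (fun i => PBTree.val α ((node l r).subtreeAt (i - a))) l a
          = eA α W l a := by
        rw [esum_congr W l a _ (fun i => PBTree.val α (l.subtreeAt (i - a))) fun i hi => by
          simp only [Finset.mem_Ioc] at hi
          rw [subtreeAt_left l r (by omega)]]
        exact esum_val W l a
      have hrec2 : esum W (fun i => PBTree.val α ((node l r).subtreeAt (i - a))) r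
            (a + l.nodes + 1)
          = eA α W r (a + l.nodes + 1) := by
        rw [esum_congr W r (a + l.nodes + 1) _
          (fun i => PBTree.val α (r.subtreeAt (i - (a + l.nodes + 1)))) fun i hi => by
          simp only [Finset.mem_Ioc] at hi
          rw [subtreeAt_right l r (by omega),
            show i - a - (l.nodes + 1) = i - (a + l.nodes + 1) by omega]]
        exact esum_val W r (a + l.nodes + 1)
      rw [hsum1, hsum2, hrec1, hrec2]


lemma rootLabel_bounds : ∀ T : PBTree, T ≠ leaf → 1 ≤ T.rootLabel ∧ T.rootLabel ≤ T.nodes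
  | PBTree.leaf, h => absurd rfl h
  | PBTree.node l r, _ => by
      simp only [rootLabel, nodes]; omega

lemma childOf_bounds : ∀ (T : PBTree) (i j : ℕ), T.childOf i j →
    1 ≤ i ∧ i ≤ T.nodes ∧ 1 ≤ j ∧ j ≤ T.nodes
  | PBTree.leaf, i, j, h => absurd h (by simp [childOf])
  | PBTree.node l r, i, j, h => by
      have hN : (node l r).nodes = l.nodes + r.nodes + 1 := rfl
      rw [hN]
      rcases h with ⟨hj, ⟨hne, hi⟩ | ⟨hne, hi⟩⟩ | h | h
      · have := rootLabel_bounds l hne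
        omega
      · have := rootLabel_bounds r hne
        omega
      · have := childOf_bounds l i j h
        omega
      · have := childOf_bounds r (i - (l.nodes + 1)) (j - (l.nodes + 1)) h
        omega

/-- Every (shifted) child interval of `S` is a subtree interval of `T'`. -/
def agrees (T' : PBTree) : PBTree → ℕ → Prop
  | PBTree.leaf, _ => True
  | PBTree.node l r, a =>
      ivl T' a l.nodes ∧ agrees T' l a ∧ ivl T' (a + l.nodes + 1) r.nodes
        ∧ agrees T' r (a + l.nodes + 1)

lemma ivl_left {l r : PBTree} {a m : ℕ} (h : ivl (node l r) a m) (hm : a + m ≤ l.nodes) :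
    ivl l a m := by
  rcases h with h0 | ⟨ha, hm'⟩ | ⟨_, h⟩ | ⟨hge, _⟩
  · exact h0 ▸ ivl_zero l a
  · exfalso
    have : l.nodes < l.nodes + r.nodes + 1 := by omega
    omega
  · exact h
  · exfalso; omega

lemma ivl_right {l r : PBTree} {a m : ℕ} (h : ivl (node l r) (l.nodes + 1 + a) m) :
    ivl r a m := by
  rcases h with h0 | ⟨ha, hm'⟩ | ⟨hle, _⟩ | ⟨_, h⟩
  · exact h0 ▸ ivl_zero r a
  · exfalso; omega
  · exfalso; omega
  · rwa [show l.nodes + 1 + a - (l.nodes + 1) = a by omega] at h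

lemma agrees_conv (T1 T2 : PBTree) (c : ℕ) :
    ∀ (S : PBTree) (a : ℕ),
      (∀ a' m, a ≤ a' → a' + m ≤ a + S.nodes → ivl T1 (c + a') m → ivl T2 a' m) →
      agrees T1 S (c + a) → agrees T2 S a
  | PBTree.leaf, a, _, _ => trivial
  | PBTree.node l r, a, hconv, hag => by
      have hN : (node l r).nodes = l.nodes + r.nodes + 1 := rfl
      rw [hN] at hconv
      obtain ⟨h1, h2, h3, h4⟩ := hag
      refine ⟨?_, ?_, ?_, ?_⟩
      · exact hconv a l.nodes le_rfl (by omega) h1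
      · exact agrees_conv T1 T2 c l a
          (fun a' m ha' hm hiv => hconv a' m ha' (by omega) hiv) h2
      · refine hconv (a + l.nodes + 1) r.nodes (by omega) (by omega) ?_
        rwa [show c + (a + l.nodes + 1) = c + a + l.nodes + 1 by omega]
      · refine agrees_conv T1 T2 c r (a + l.nodes + 1)
          (fun a' m ha' hm hiv => hconv a' m (by omega) (by omega) hiv) ?_
        rwa [show c + (a + l.nodes + 1) = c + a + l.nodes + 1 by omega]

lemma nodes_eq_zero {T : PBTree} (h : T.nodes = 0) : T = leaf := by
  cases T with
  | leaf => rfl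
  | node l r => exact absurd h (by simp [nodes])

lemma rigid : ∀ T' T : PBTree, T.nodes = T'.nodes → agrees T' T 0 → T = T'
  | PBTree.leaf, T, hn, _ => nodes_eq_zero (by simpa [nodes] using hn)
  | PBTree.node l' r', T, hn, hag => by
      cases T with
      | leaf => exact absurd hn.symm (by simp [nodes])
      | node l r =>
        have hN : (node l r).nodes = l.nodes + r.nodes + 1 := rfl
        have hN' : (node l' r').nodes = l'.nodes + r'.nodes + 1 := rfl
        have hsz : l.nodes + r.nodes = l'.nodes + r'.nodes := by
          rw [hN, hN'] at hn; omega
        obtain ⟨h1, h2, h3, h4⟩ := hag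
        rw [show (0 : ℕ) + l.nodes + 1 = l.nodes + 1 by omega] at h3 h4
        -- l.nodes ≤ l'.nodes
        have hle1 : l.nodes ≤ l'.nodes := by
          rcases h1 with h0 | ⟨_, hm⟩ | ⟨hle, _⟩ | ⟨hge, _⟩
          · omega
          · omega
          · omega
          · omega
        have heq1 : l.nodes = l'.nodes ∧ r.nodes = r'.nodes := by
          rcases h3 with h0 | ⟨ha, _⟩ | ⟨hle, _⟩ | ⟨hge, _⟩
          · omega
          · omega
          · omega
          · omega
        -- recurse
        have hl : l = l' := by
          refine rigid l' l (by omega) ?_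
          refine agrees_conv (node l' r') l' 0 l 0 (fun a' m ha' hm hiv => ?_) ?_
          · exact ivl_left (by simpa using hiv) (by omega)
          · simpa using h2
        have hr : r = r' := by
          refine rigid r' r (by omega) ?_
          refine agrees_conv (node l' r') r' (l'.nodes + 1) r 0
            (fun a' m ha' hm hiv => ?_) ?_
          · exact ivl_right hiv
          · rw [show l'.nodes + 1 + 0 = l.nodes + 1 by omega]
            exact h4
        rw [hl, hr]


lemma mainI (n : ℕ) (α : ℕ → ℝ) (hα : ∀ i j : ℕ, 1 ≤ i → i < j → j ≤ n → α i < α j)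
    (T' : PBTree) (hn : T'.nodes ≤ n) (W : ℕ → ℝ) :
    ∀ (S : PBTree) (a : ℕ), a + S.nodes ≤ T'.nodes →
      (∀ i j, S.childOf i j → W (a + i) < W (a + j)) →
      esum W (fun i => PBTree.val α (T'.subtreeAt i)) S a ≤ eA α W S a ∧
        (esum W (fun i => PBTree.val α (T'.subtreeAt i)) S a = eA α W S a ↔ agrees T' S a)
  | PBTree.leaf, a, _, _ => by
      constructor
      · exact le_rfl
      · exact ⟨fun _ => trivial, fun _ => rfl⟩
  | PBTree.node l r, a, hb, hchild => by
      have hN : (node l r).nodes = l.nodes + r.nodes + 1 := rfl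
      rw [hN] at hb
      have hv1 : ∑ i ∈ Finset.Ioc a (a + l.nodes),
          PBTree.val α (T'.subtreeAt i) = SS α T' a l.nodes := rfl
      have hv2 : ∑ i ∈ Finset.Ioc (a + l.nodes + 1) (a + l.nodes + 1 + r.nodes),
          PBTree.val α (T'.subtreeAt i) = SS α T' (a + l.nodes + 1) r.nodes := rfl
      have hk1 := key n α hα T' hn a l.nodes (by omega)
      have hk2 := key n α hα T' hn (a + l.nodes + 1) r.nodes (by omega)
      have hside1 : (W (a + l.rootLabel) - W (a + l.nodes + 1)) * SS α T' a l.nodes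
            ≤ (W (a + l.rootLabel) - W (a + l.nodes + 1)) * Asum α l.nodes
          ∧ ((W (a + l.rootLabel) - W (a + l.nodes + 1)) * SS α T' a l.nodes
              = (W (a + l.rootLabel) - W (a + l.nodes + 1)) * Asum α l.nodes
            ↔ ivl T' a l.nodes) := by
        by_cases hl : l = PBTree.leaf
        · subst hl
          rw [show (PBTree.leaf).nodes = 0 from rfl, SS_zero,
            show Asum α 0 = 0 by simp [Asum]]
          exact ⟨le_rfl, ⟨fun _ => ivl_zero T' a, fun _ => rfl⟩⟩
        · have hc : W (a + l.rootLabel) - W (a + l.nodes + 1) < 0 := by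
            have h := hchild l.rootLabel (l.nodes + 1) (Or.inl ⟨rfl, Or.inl ⟨hl, rfl⟩⟩)
            rw [show a + (l.nodes + 1) = a + l.nodes + 1 by omega] at h
            linarith
          constructor
          · exact mul_le_mul_of_nonpos_left hk1.1 hc.le
          · constructor
            · intro h
              exact hk1.2.mp (mul_left_cancel₀ (ne_of_lt hc) h)
            · intro h
              rw [hk1.2.mpr h]
      have hside2 : (W (a + l.nodes + 1 + r.rootLabel) - W (a + l.nodes + 1))
              * SS α T' (a + l.nodes + 1) r.nodes
            ≤ (W (a + l.nodes + 1 + r.rootLabel) - W (a + l.nodes + 1)) * Asum α r.nodes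
          ∧ ((W (a + l.nodes + 1 + r.rootLabel) - W (a + l.nodes + 1))
              * SS α T' (a + l.nodes + 1) r.nodes
              = (W (a + l.nodes + 1 + r.rootLabel) - W (a + l.nodes + 1)) * Asum α r.nodes
            ↔ ivl T' (a + l.nodes + 1) r.nodes) := by
        by_cases hr : r = PBTree.leaf
        · subst hr
          rw [show (PBTree.leaf).nodes = 0 from rfl, SS_zero,
            show Asum α 0 = 0 by simp [Asum]]
          exact ⟨le_rfl, ⟨fun _ => ivl_zero T' _, fun _ => rfl⟩⟩
        · have hc : W (a + l.nodes + 1 + r.rootLabel) - W (a + l.nodes + 1) < 0 := by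
            have h := hchild (l.nodes + 1 + r.rootLabel) (l.nodes + 1)
              (Or.inl ⟨rfl, Or.inr ⟨hr, rfl⟩⟩)
            rw [show a + (l.nodes + 1) = a + l.nodes + 1 by omega,
              show a + (l.nodes + 1 + r.rootLabel) = a + l.nodes + 1 + r.rootLabel
                by omega] at h
            linarith
          constructor
          · exact mul_le_mul_of_nonpos_left hk2.1 hc.le
          · constructor
            · intro h
              exact hk2.2.mp (mul_left_cancel₀ (ne_of_lt hc) h)
            · intro h
              rw [hk2.2.mpr h]
      have ihl := mainI n α hα T' hn W l a (by omega)
        (fun i j h => hchild i j (Or.inr (Or.inl h)))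
      have ihr := mainI n α hα T' hn W r (a + l.nodes + 1) (by omega) (by
        intro i j h
        have h' : (node l r).childOf (l.nodes + 1 + i) (l.nodes + 1 + j) := by
          refine Or.inr (Or.inr ?_)
          rw [show l.nodes + 1 + i - (l.nodes + 1) = i by omega,
            show l.nodes + 1 + j - (l.nodes + 1) = j by omega]
          exact h
        have hw := hchild _ _ h'
        rw [show a + (l.nodes + 1 + i) = a + l.nodes + 1 + i by omega,
          show a + (l.nodes + 1 + j) = a + l.nodes + 1 + j by omega] at hw
        exact hw)
      rw [esum, eA, hv1, hv2]
      have hag : agrees T' (node l r) a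
          ↔ (ivl T' a l.nodes ∧ agrees T' l a ∧ ivl T' (a + l.nodes + 1) r.nodes
              ∧ agrees T' r (a + l.nodes + 1)) := Iff.rfl
      constructor
      · linarith [hside1.1, hside2.1, ihl.1, ihr.1]
      · rw [hag]
        constructor
        · intro heq
          have e1 : (W (a + l.rootLabel) - W (a + l.nodes + 1)) * SS α T' a l.nodes
              = (W (a + l.rootLabel) - W (a + l.nodes + 1)) * Asum α l.nodes := by
            linarith [hside1.1, hside2.1, ihl.1, ihr.1]
          have e2 : esum W (fun i => PBTree.val α (T'.subtreeAt i)) l a = eA α W l a := by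
            linarith [hside1.1, hside2.1, ihl.1, ihr.1]
          have e3 : (W (a + l.nodes + 1 + r.rootLabel) - W (a + l.nodes + 1))
                * SS α T' (a + l.nodes + 1) r.nodes
              = (W (a + l.nodes + 1 + r.rootLabel) - W (a + l.nodes + 1))
                * Asum α r.nodes := by
            linarith [hside1.1, hside2.1, ihl.1, ihr.1]
          have e4 : esum W (fun i => PBTree.val α (T'.subtreeAt i)) r (a + l.nodes + 1)
              = eA α W r (a + l.nodes + 1) := by
            linarith [hside1.1, hside2.1, ihl.1, ihr.1]
          exact ⟨hside1.2.mp e1, ihl.2.mp e2, hside2.2.mp e3, ihr.2.mp e4⟩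
        · rintro ⟨g1, g2, g3, g4⟩
          have e1 := hside1.2.mpr g1
          have e2 := ihl.2.mpr g2
          have e3 := hside2.2.mpr g3
          have e4 := ihr.2.mpr g4
          linarith


lemma sum_Ioc_range (g : ℕ → ℝ) : ∀ n : ℕ,
    ∑ i ∈ Finset.Ioc 0 n, g i = ∑ i ∈ Finset.range n, g (i + 1)
  | 0 => by simp
  | n + 1 => by
      rw [Finset.sum_Ioc_succ_top (Nat.zero_le n) g, Finset.sum_range_succ,
        sum_Ioc_range g n]

end Aux




/-- Corollary 4.9: for a strictly increasing `α ∈ ℝ^n`, two plane binary trees `T`, `T'` with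
`n` internal nodes, and any `w ∈ ℝ^n` with `w_i < w_j` whenever the internal node labeled `i`
is a child of the one labeled `j` in `T`, one has `⟨w, v_{T'}^α⟩ ≤ ⟨w, v_T^α⟩`, with equality
iff `T = T'`. -/
theorem loday_vertex_maximizes (n : ℕ) (α : ℕ → ℝ)
    (hα : ∀ i j : ℕ, 1 ≤ i → i < j → j ≤ n → α i < α j)
    (T T' : PBTree) (hT : T.nodes = n) (hT' : T'.nodes = n)
    (w : Fin n → ℝ)
    (hw : ∀ i j : Fin n, T.childOf (i.1 + 1) (j.1 + 1) → w i < w j) :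
    (∑ i, w i * lodayVec n α T' i) ≤ (∑ i, w i * lodayVec n α T i) ∧
    ((∑ i, w i * lodayVec n α T i) = (∑ i, w i * lodayVec n α T' i) ↔ T = T') := by
  classical
  set W : ℕ → ℝ := fun i => if h : i - 1 < n then w ⟨i - 1, h⟩ else 0 with hW
  have hWval : ∀ i : Fin n, W (i.1 + 1) = w i := by
    intro i
    simp [hW]
  have hconv : ∀ U : PBTree, U.nodes = n →
      (∑ i, w i * lodayVec n α U i)
        = ∑ i ∈ Finset.Ioc 0 n, W i * PBTree.val α (U.subtreeAt i) := by
    intro U hU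
    rw [sum_Ioc_range, Finset.sum_range
      (fun i => W (i + 1) * PBTree.val α (U.subtreeAt (i + 1)))]
    refine Finset.sum_congr rfl fun i _ => ?_
    rw [hWval i]
    rfl
  have hWchild : ∀ i j, T.childOf i j → W (0 + i) < W (0 + j) := by
    intro i j h
    obtain ⟨hi1, hi2, hj1, hj2⟩ := childOf_bounds T i j h
    rw [zero_add, zero_add]
    have hi : i - 1 < n := by omega
    have hj : j - 1 < n := by omega
    have hc := hw ⟨i - 1, hi⟩ ⟨j - 1, hj⟩ (by
      rw [show i - 1 + 1 = i by omega, show j - 1 + 1 = j by omega]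
      exact h)
    simpa [hW, dif_pos hi, dif_pos hj] using hc
  have hDT := Dsum W (fun i => PBTree.val α (T.subtreeAt i)) T 0
  have hDT' := Dsum W (fun i => PBTree.val α (T'.subtreeAt i)) T 0
  simp only [zero_add, hT] at hDT hDT'
  have hSvT : ∑ i ∈ Finset.Ioc 0 n, PBTree.val α (T.subtreeAt i) = Asum α n := by
    have h := SS_total (α := α) T
    unfold SS at h
    rw [zero_add, hT] at h
    exact h
  have hSvT' : ∑ i ∈ Finset.Ioc 0 n, PBTree.val α (T'.subtreeAt i) = Asum α n := by
    have h := SS_total (α := α) T'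
    unfold SS at h
    rw [zero_add, hT'] at h
    exact h
  have hesT : esum W (fun i => PBTree.val α (T.subtreeAt i)) T 0 = eA α W T 0 := by
    have h := esum_val (α := α) W T 0
    simpa using h
  have hmain := mainI n α hα T' (le_of_eq hT') W T 0
    (le_of_eq (by rw [zero_add, hT, hT'])) hWchild
  have E : (∑ i, w i * lodayVec n α T i) - (∑ i, w i * lodayVec n α T' i)
      = eA α W T 0 - esum W (fun i => PBTree.val α (T'.subtreeAt i)) T 0 := by
    rw [hconv T hT, hconv T' hT', hDT, hDT', hSvT, hSvT', hesT]
    ring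
  constructor
  · linarith [hmain.1, E]
  · constructor
    · intro heq
      have he : esum W (fun i => PBTree.val α (T'.subtreeAt i)) T 0 = eA α W T 0 := by
        linarith [E]
      exact rigid T' T (hT.trans hT'.symm) (hmain.2.mp he)
    · intro h
      subst h
      rfl
end

section
/- Let α ∈ ℝ^{d+1} be strictly increasing and let LodAsso(α) := convexHull{ v_T^α : T a plane binary tree with d+1 internal nodes } ⊆ ℝ^{d+1}. Then: (1) the points v_T^α are pairwise distinct, the set of extreme points of LodAsso(α) is exactly { v_T^α : T a plane binary tree with d+1 internal nodes }, and the affine span of LodAsso(α) is the hyperplane {x ∈ ℝ^{d+1} : Σ_{i=1}^{d+1} x_i = Σ_{i=1}^{d+1} α_i}; (2) for each plane binary tree T with d+1 internal nodes, {w ∈ ℝ^{d+1} : ⟨w, v_T^α⟩ ≥ ⟨w, p⟩ for all p ∈ LodAsso(α)} = {w ∈ ℝ^{d+1} : w_i ≤ w_j whenever i ≼_T j}. -/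
/-- The vertex candidates of the Loday associahedron `LodAsso(α)`. -/
def lodayVerts (d : ℕ) (α : ℕ → ℝ) : Set (Fin (d + 1) → ℝ) :=
  {x | ∃ T : PBTree, T.nodes = d + 1 ∧ x = lodayVec (d + 1) α T}

namespace LodayAux

open PBTree Finset

/-- partial sums of `α` -/
def sA (α : ℕ → ℝ) (m : ℕ) : ℝ := ∑ k ∈ Finset.Icc 1 m, α k

lemma sA_zero (α : ℕ → ℝ) : sA α 0 = 0 := by simp [sA]

lemma sA_succ (α : ℕ → ℝ) (m : ℕ) : sA α (m + 1) = sA α m + α (m + 1) := by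
  rw [sA, sA, Finset.sum_Icc_succ_top (by omega)]

lemma val_node (α : ℕ → ℝ) (l r : PBTree) :
    val α (node l r) = sA α (l.nodes + r.nodes + 1) - sA α l.nodes - sA α r.nodes := rfl

section
variable {d : ℕ} {α : ℕ → ℝ} (hα : ∀ i j : ℕ, 1 ≤ i → i < j → j ≤ d + 1 → α i < α j)
include hα

lemma sA_add_lt : ∀ m, 1 ≤ m → ∀ s t : ℕ, s < t → t + m ≤ d + 1 →
    sA α (s + m) + sA α t < sA α s + sA α (t + m) := by
  intro m
  induction m with
  | zero => omega
  | succ m ih =>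
    intro _ s t hst htm
    rcases Nat.eq_zero_or_pos m with hm | hm
    · subst hm
      have : α (s + 1) < α (t + 1) := hα (s + 1) (t + 1) (by omega) (by omega) (by omega)
      rw [sA_succ, sA_succ]
      linarith
    · have h1 := ih hm s t hst (by omega)
      have h2 : α (s + m + 1) < α (t + m + 1) := hα _ _ (by omega) (by omega) (by omega)
      have e1 : s + (m + 1) = (s + m) + 1 := by omega
      have e2 : t + (m + 1) = (t + m) + 1 := by omega
      rw [e1, e2, sA_succ, sA_succ]
      linarith

end

lemma nodes_eq_zero : ∀ {S : PBTree}, S.nodes = 0 → S = leaf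
  | leaf, _ => rfl
  | node l r, h => by simp [nodes] at h

lemma anc_bounds : ∀ (S : PBTree) {i j : ℕ}, anc S i j →
    1 ≤ i ∧ i ≤ S.nodes ∧ 1 ≤ j ∧ j ≤ S.nodes
  | leaf, i, j, h => h.elim
  | node l r, i, j, h => by
    rcases h with ⟨rfl, h1, h2⟩ | h | h
    · simp [nodes]; omega
    · have := anc_bounds l h
      simp [nodes]; omega
    · have := anc_bounds r h
      simp [nodes]; omega

/-- inner product of weight vector with the Loday vector, with offset `o`. -/
def ip (α : ℕ → ℝ) (w : ℕ → ℝ) : ℕ → PBTree → ℝ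
  | _, leaf => 0
  | o, node l r =>
      ip α w o l + w (o + (l.nodes + 1)) * val α (node l r) + ip α w (o + (l.nodes + 1)) r

/-- the rotation identity. -/
lemma ip_rot (α : ℕ → ℝ) (w : ℕ → ℝ) (o : ℕ) (P Q B : PBTree) :
    ip α w o (node P (node Q B)) =
      ip α w o (node (node P Q) B)
      + (sA α (P.nodes + Q.nodes + B.nodes + 2) - sA α (Q.nodes + B.nodes + 1)
          - sA α (P.nodes + Q.nodes + 1) + sA α Q.nodes)
        * (w (o + (P.nodes + 1)) - w (o + (P.nodes + Q.nodes + 2))) := by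
  simp only [ip, val_node, nodes]
  rw [show P.nodes + (Q.nodes + B.nodes + 1) + 1 = P.nodes + Q.nodes + B.nodes + 2 by omega,
    show P.nodes + Q.nodes + 1 + B.nodes + 1 = P.nodes + Q.nodes + B.nodes + 2 by omega,
    show o + (P.nodes + 1) + (Q.nodes + 1) = o + (P.nodes + Q.nodes + 2) by omega,
    show o + (P.nodes + Q.nodes + 1 + 1) = o + (P.nodes + Q.nodes + 2) by omega]
  ring

end LodayAux
namespace LodayAux
open PBTree Finset

section
variable {d : ℕ} {α : ℕ → ℝ} (hα : ∀ i j : ℕ, 1 ≤ i → i < j → j ≤ d + 1 → α i < α j)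
include hα

/-- positivity of the rotation coefficient -/
lemma cpos (p q b : ℕ) (h : p + q + b + 2 ≤ d + 1) :
    0 < sA α (p + q + b + 2) - sA α (q + b + 1) - sA α (p + q + 1) + sA α q := by
  have := sA_add_lt hα (p + 1) (by omega) q (q + b + 1) (by omega) (by omega)
  rw [show q + (p + 1) = p + q + 1 by omega, show q + b + 1 + (p + 1) = p + q + b + 2 by omega]
    at this
  linarith

end

/-- split a tree at label ρ into the part with labels `< ρ` and the part with labels `> ρ`. -/
def splitAt : PBTree → ℕ → PBTree × PBTree
  | leaf, _ => (leaf, leaf)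
  | node l r, ρ =>
      if ρ = l.nodes + 1 then (l, r)
      else if ρ ≤ l.nodes then ((splitAt l ρ).1, node (splitAt l ρ).2 r)
      else (node l (splitAt r (ρ - (l.nodes + 1))).1, (splitAt r (ρ - (l.nodes + 1))).2)

lemma splitAt_nodes : ∀ (S : PBTree) (ρ : ℕ), 1 ≤ ρ → ρ ≤ S.nodes →
    (splitAt S ρ).1.nodes = ρ - 1 ∧ (splitAt S ρ).2.nodes = S.nodes - ρ
  | leaf, ρ, h1, h2 => by simp [nodes] at h2; omega
  | node l r, ρ, h1, h2 => by
    simp only [nodes] at h2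
    rcases Nat.lt_trichotomy ρ (l.nodes + 1) with h | h | h
    · have hle : ρ ≤ l.nodes := by omega
      have := splitAt_nodes l ρ h1 hle
      simp only [splitAt, if_neg (by omega : ¬ ρ = l.nodes + 1), if_pos hle, nodes]
      omega
    · simp [splitAt, h, nodes]
    · have hle : ρ - (l.nodes + 1) ≤ r.nodes := by omega
      have := splitAt_nodes r (ρ - (l.nodes + 1)) (by omega) hle
      simp only [splitAt, if_neg (by omega : ¬ ρ = l.nodes + 1),
        if_neg (by omega : ¬ ρ ≤ l.nodes), nodes]
      omega

lemma ip_node_left_le {α w o} {A A' B : PBTree} (hn : A.nodes = A'.nodes)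
    (h : ip α w o A ≤ ip α w o A') : ip α w o (node A B) ≤ ip α w o (node A' B) := by
  simp only [ip, val_node, hn]
  linarith

lemma ip_node_right_le {α w o} {A B B' : PBTree} (hn : B.nodes = B'.nodes)
    (h : ip α w (o + (A.nodes + 1)) B ≤ ip α w (o + (A.nodes + 1)) B') :
    ip α w o (node A B) ≤ ip α w o (node A B') := by
  simp only [ip, val_node, hn]
  linarith

lemma ip_node_left_lt {α w o} {A A' B : PBTree} (hn : A.nodes = A'.nodes)
    (h : ip α w o A < ip α w o A') : ip α w o (node A B) < ip α w o (node A' B) := by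
  simp only [ip, val_node, hn]
  linarith

lemma ip_node_right_lt {α w o} {A B B' : PBTree} (hn : B.nodes = B'.nodes)
    (h : ip α w (o + (A.nodes + 1)) B < ip α w (o + (A.nodes + 1)) B') :
    ip α w o (node A B) < ip α w o (node A B') := by
  simp only [ip, val_node, hn]
  linarith

section
variable {d : ℕ} {α : ℕ → ℝ} (hα : ∀ i j : ℕ, 1 ≤ i → i < j → j ≤ d + 1 → α i < α j)
include hα

lemma splitAt_le (w : ℕ → ℝ) :
    ∀ (S : PBTree) (o ρ : ℕ), S.nodes ≤ d + 1 → 1 ≤ ρ → ρ ≤ S.nodes →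
    (∀ p, 1 ≤ p → p ≤ S.nodes → w (o + p) ≤ w (o + ρ)) →
    ip α w o S ≤ ip α w o (node (splitAt S ρ).1 (splitAt S ρ).2)
  | leaf, o, ρ, _, h1, h2, _ => by simp [nodes] at h2; omega
  | node l r, o, ρ, hsz, h1, h2, hmax => by
    have hnn : (node l r).nodes = l.nodes + r.nodes + 1 := rfl
    rcases Nat.lt_trichotomy ρ (l.nodes + 1) with h | h | h
    · -- ρ in the left subtree
      have hle : ρ ≤ l.nodes := by omega
      obtain ⟨e1, e2⟩ := splitAt_nodes l ρ h1 hle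
      simp only [splitAt, if_neg (by omega : ¬ ρ = l.nodes + 1), if_pos hle]
      -- target : ip S ≤ ip (node A1 (node A2 r))
      set A1 := (splitAt l ρ).1
      set A2 := (splitAt l ρ).2
      have hrot := ip_rot α w o A1 A2 r
      have hc : 0 < sA α (A1.nodes + A2.nodes + r.nodes + 2) - sA α (A2.nodes + r.nodes + 1)
          - sA α (A1.nodes + A2.nodes + 1) + sA α A2.nodes := by
        apply cpos hα
        rw [hnn] at hsz
        omega
      have hstep1 : ip α w o (node l r) ≤ ip α w o (node (node A1 A2) r) := by
        apply ip_node_left_le (by simp [nodes]; omega)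
        exact splitAt_le w l o ρ (by rw [hnn] at hsz; omega) h1 hle
          (fun p hp1 hp2 => hmax p hp1 (by omega))
      have hw : w (o + (l.nodes + 1)) ≤ w (o + ρ) := by
        have := hmax (l.nodes + 1) (by omega) (by omega)
        exact this
      have eA : A1.nodes + A2.nodes + 2 = l.nodes + 1 := by omega
      have eρ : A1.nodes + 1 = ρ := by omega
      rw [eA, eρ] at hrot
      nlinarith [hc, hw, hstep1, hrot]
    · simp only [splitAt, if_pos h]
      subst h
      exact le_refl _
    · -- ρ in the right subtree
      have hgt : ¬ ρ ≤ l.nodes := by omega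
      have hle : ρ - (l.nodes + 1) ≤ r.nodes := by omega
      have h1' : 1 ≤ ρ - (l.nodes + 1) := by omega
      obtain ⟨e1, e2⟩ := splitAt_nodes r (ρ - (l.nodes + 1)) h1' hle
      simp only [splitAt, if_neg (by omega : ¬ ρ = l.nodes + 1), if_neg hgt]
      set B1 := (splitAt r (ρ - (l.nodes + 1))).1
      set B2 := (splitAt r (ρ - (l.nodes + 1))).2
      have hrot := ip_rot α w o l B1 B2
      have hc : 0 < sA α (l.nodes + B1.nodes + B2.nodes + 2) - sA α (B1.nodes + B2.nodes + 1)
          - sA α (l.nodes + B1.nodes + 1) + sA α B1.nodes := by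
        apply cpos hα
        rw [hnn] at hsz
        omega
      have hstep1 : ip α w o (node l r) ≤ ip α w o (node l (node B1 B2)) := by
        apply ip_node_right_le (by simp [nodes]; omega)
        have := splitAt_le w r (o + (l.nodes + 1)) (ρ - (l.nodes + 1))
          (by rw [hnn] at hsz; omega) h1' hle
          (fun p hp1 hp2 => by
            have := hmax (l.nodes + 1 + p) (by omega) (by omega)
            rw [show o + (l.nodes + 1) + p = o + (l.nodes + 1 + p) by omega,
              show o + (l.nodes + 1) + (ρ - (l.nodes + 1)) = o + ρ by omega]
            exact this)
        exact this
      have hw : w (o + (l.nodes + 1)) ≤ w (o + ρ) := hmax (l.nodes + 1) (by omega) (by omega)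
      have eρ : l.nodes + B1.nodes + 2 = ρ := by omega
      rw [eρ] at hrot
      nlinarith [hc, hw, hstep1, hrot]

end
end LodayAux
namespace LodayAux
open PBTree Finset

lemma anc_node {l r : PBTree} {i j : ℕ} : anc (node l r) i j ↔
    (j = l.nodes + 1 ∧ 1 ≤ i ∧ i ≤ l.nodes + r.nodes + 1)
      ∨ anc l i j ∨ anc r (i - (l.nodes + 1)) (j - (l.nodes + 1)) := Iff.rfl

section
variable {d : ℕ} {α : ℕ → ℝ} (hα : ∀ i j : ℕ, 1 ≤ i → i < j → j ≤ d + 1 → α i < α j)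
include hα

lemma splitAt_lt (w : ℕ → ℝ) (S : PBTree) (o ρ : ℕ) (hsz : S.nodes ≤ d + 1)
    (h1 : 1 ≤ ρ) (h2 : ρ ≤ S.nodes)
    (hmax : ∀ p, 1 ≤ p → p ≤ S.nodes → w (o + p) ≤ w (o + ρ))
    (hroot : S.rootLabel ≠ ρ)
    (hstrict : ∀ p, 1 ≤ p → p ≤ S.nodes → p ≠ ρ → w (o + p) < w (o + ρ)) :
    ip α w o S < ip α w o (node (splitAt S ρ).1 (splitAt S ρ).2) := by
  cases S with
  | leaf => simp [nodes] at h2; omega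
  | node l r =>
    have hnn : (node l r).nodes = l.nodes + r.nodes + 1 := rfl
    have hrl : (node l r).rootLabel = l.nodes + 1 := rfl
    rw [hrl] at hroot
    have hwlt : w (o + (l.nodes + 1)) < w (o + ρ) :=
      hstrict (l.nodes + 1) (by omega) (by omega) hroot
    rcases Nat.lt_trichotomy ρ (l.nodes + 1) with h | h | h
    · have hle : ρ ≤ l.nodes := by omega
      obtain ⟨e1, e2⟩ := splitAt_nodes l ρ h1 hle
      simp only [splitAt, if_neg (by omega : ¬ ρ = l.nodes + 1), if_pos hle]
      set A1 := (splitAt l ρ).1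
      set A2 := (splitAt l ρ).2
      have hrot := ip_rot α w o A1 A2 r
      have hc : 0 < sA α (A1.nodes + A2.nodes + r.nodes + 2) - sA α (A2.nodes + r.nodes + 1)
          - sA α (A1.nodes + A2.nodes + 1) + sA α A2.nodes := by
        apply cpos hα
        rw [hnn] at hsz
        omega
      have hstep1 : ip α w o (node l r) ≤ ip α w o (node (node A1 A2) r) := by
        apply ip_node_left_le (by simp [nodes]; omega)
        exact splitAt_le hα w l o ρ (by rw [hnn] at hsz; omega) h1 hle
          (fun p hp1 hp2 => hmax p hp1 (by omega))
      have eA : A1.nodes + A2.nodes + 2 = l.nodes + 1 := by omega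
      have eρ : A1.nodes + 1 = ρ := by omega
      rw [eA, eρ] at hrot
      nlinarith [hc, hwlt, hstep1, hrot]
    · omega
    · have hgt : ¬ ρ ≤ l.nodes := by omega
      have hle : ρ - (l.nodes + 1) ≤ r.nodes := by omega
      have h1' : 1 ≤ ρ - (l.nodes + 1) := by omega
      obtain ⟨e1, e2⟩ := splitAt_nodes r (ρ - (l.nodes + 1)) h1' hle
      simp only [splitAt, if_neg (by omega : ¬ ρ = l.nodes + 1), if_neg hgt]
      set B1 := (splitAt r (ρ - (l.nodes + 1))).1
      set B2 := (splitAt r (ρ - (l.nodes + 1))).2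
      have hrot := ip_rot α w o l B1 B2
      have hc : 0 < sA α (l.nodes + B1.nodes + B2.nodes + 2) - sA α (B1.nodes + B2.nodes + 1)
          - sA α (l.nodes + B1.nodes + 1) + sA α B1.nodes := by
        apply cpos hα
        rw [hnn] at hsz
        omega
      have hstep1 : ip α w o (node l r) ≤ ip α w o (node l (node B1 B2)) := by
        apply ip_node_right_le (by simp [nodes]; omega)
        exact splitAt_le hα w r (o + (l.nodes + 1)) (ρ - (l.nodes + 1))
          (by rw [hnn] at hsz; omega) h1' hle
          (fun p hp1 hp2 => by
            have := hmax (l.nodes + 1 + p) (by omega) (by omega)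
            rw [show o + (l.nodes + 1) + p = o + (l.nodes + 1 + p) by omega,
              show o + (l.nodes + 1) + (ρ - (l.nodes + 1)) = o + ρ by omega]
            exact this)
      have eρ : l.nodes + B1.nodes + 2 = ρ := by omega
      rw [eρ] at hrot
      nlinarith [hc, hwlt, hstep1, hrot]

lemma master_le (w : ℕ → ℝ) : ∀ (T S : PBTree) (o : ℕ), S.nodes = T.nodes →
    T.nodes ≤ d + 1 → (∀ i j, anc T i j → w (o + i) ≤ w (o + j)) →
    ip α w o S ≤ ip α w o T
  | leaf, S, o, hn, _, _ => by rw [nodes_eq_zero hn]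
  | node L R, S, o, hn, hsz, hw => by
    have hnn : (node L R).nodes = L.nodes + R.nodes + 1 := rfl
    rw [hnn] at hn hsz
    have hρ2 : L.nodes + 1 ≤ S.nodes := by omega
    have hmax : ∀ p, 1 ≤ p → p ≤ S.nodes → w (o + p) ≤ w (o + (L.nodes + 1)) :=
      fun p hp1 hp2 => hw p (L.nodes + 1) (anc_node.2 (Or.inl ⟨rfl, hp1, by omega⟩))
    obtain ⟨e1, e2⟩ := splitAt_nodes S (L.nodes + 1) (by omega) hρ2
    have h0 := splitAt_le hα w S o (L.nodes + 1) (by omega) (by omega) hρ2 hmax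
    set S1 := (splitAt S (L.nodes + 1)).1 with hS1
    set S2 := (splitAt S (L.nodes + 1)).2 with hS2
    have hL : ip α w o S1 ≤ ip α w o L :=
      master_le w L S1 o (by omega) (by omega)
        (fun i j hij => hw i j (anc_node.2 (Or.inr (Or.inl hij))))
    have hR : ip α w (o + (L.nodes + 1)) S2 ≤ ip α w (o + (L.nodes + 1)) R :=
      master_le w R S2 (o + (L.nodes + 1)) (by omega) (by omega)
        (fun i j hij => by
          have hb := anc_bounds R hij
          have := hw (L.nodes + 1 + i) (L.nodes + 1 + j) (anc_node.2 (Or.inr (Or.inr (by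
            rw [show L.nodes + 1 + i - (L.nodes + 1) = i by omega,
              show L.nodes + 1 + j - (L.nodes + 1) = j by omega]
            exact hij))))
          rw [show o + (L.nodes + 1) + i = o + (L.nodes + 1 + i) by omega,
            show o + (L.nodes + 1) + j = o + (L.nodes + 1 + j) by omega]
          exact this)
    calc ip α w o S ≤ ip α w o (node S1 S2) := h0
    _ ≤ ip α w o (node L S2) := ip_node_left_le (by omega) hL
    _ ≤ ip α w o (node L R) := ip_node_right_le (by omega) hR

lemma master_lt (w : ℕ → ℝ) : ∀ (T S : PBTree) (o : ℕ), S.nodes = T.nodes →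
    T.nodes ≤ d + 1 → S ≠ T →
    (∀ i j, anc T i j → i ≠ j → w (o + i) < w (o + j)) →
    ip α w o S < ip α w o T
  | leaf, S, o, hn, _, hne, _ => absurd (nodes_eq_zero hn) hne
  | node L R, S, o, hn, hsz, hne, hst => by
    have hw : ∀ i j, anc (node L R) i j → w (o + i) ≤ w (o + j) := fun i j h => by
      by_cases hij : i = j
      · subst hij; exact le_refl _
      · exact (hst i j h hij).le
    have hnn : (node L R).nodes = L.nodes + R.nodes + 1 := rfl
    rw [hnn] at hsz
    by_cases hr : S.rootLabel = L.nodes + 1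
    · cases S with
      | leaf => exact absurd hn (by simp [nodes])
      | node X Y =>
        have hX : X.nodes = L.nodes := by
          have : (node X Y).rootLabel = X.nodes + 1 := rfl
          omega
        have hY : Y.nodes = R.nodes := by
          have h1 : (node X Y).nodes = X.nodes + Y.nodes + 1 := rfl
          rw [hnn] at hn; omega
        by_cases hXL : X = L
        · subst hXL
          have hYR : Y ≠ R := fun h => hne (by rw [h])
          apply ip_node_right_lt hY
          exact master_lt w R Y (o + (X.nodes + 1)) hY (by omega) hYR
            (fun i j hij hne' => by
              have hb := anc_bounds R hij
              have := hst (X.nodes + 1 + i) (X.nodes + 1 + j) (anc_node.2 (Or.inr (Or.inr (by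
                rw [show X.nodes + 1 + i - (X.nodes + 1) = i by omega,
                  show X.nodes + 1 + j - (X.nodes + 1) = j by omega]
                exact hij)))) (by omega)
              rw [show o + (X.nodes + 1) + i = o + (X.nodes + 1 + i) by omega,
                show o + (X.nodes + 1) + j = o + (X.nodes + 1 + j) by omega]
              exact this)
        · have h1 : ip α w o X < ip α w o L :=
            master_lt w L X o hX (by omega) hXL
              (fun i j hij hne' => hst i j (anc_node.2 (Or.inr (Or.inl hij))) hne')
          have h2 : ip α w (o + (X.nodes + 1)) Y ≤ ip α w (o + (X.nodes + 1)) R := by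
            rw [hX]
            exact master_le hα w R Y (o + (L.nodes + 1)) hY (by omega)
              (fun i j hij => by
                have hb := anc_bounds R hij
                have := hw (L.nodes + 1 + i) (L.nodes + 1 + j) (anc_node.2 (Or.inr (Or.inr (by
                  rw [show L.nodes + 1 + i - (L.nodes + 1) = i by omega,
                    show L.nodes + 1 + j - (L.nodes + 1) = j by omega]
                  exact hij))))
                rw [show o + (L.nodes + 1) + i = o + (L.nodes + 1 + i) by omega,
                  show o + (L.nodes + 1) + j = o + (L.nodes + 1 + j) by omega]
                exact this)
          calc ip α w o (node X Y) ≤ ip α w o (node X R) := ip_node_right_le hY h2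
          _ < ip α w o (node L R) := ip_node_left_lt hX h1
    · -- the roots differ : strict split step
      have hρ2 : L.nodes + 1 ≤ S.nodes := by omega
      have hmax : ∀ p, 1 ≤ p → p ≤ S.nodes → w (o + p) ≤ w (o + (L.nodes + 1)) :=
        fun p hp1 hp2 => hw p (L.nodes + 1) (anc_node.2 (Or.inl ⟨rfl, hp1, by omega⟩))
      have hstrict : ∀ p, 1 ≤ p → p ≤ S.nodes → p ≠ L.nodes + 1 →
          w (o + p) < w (o + (L.nodes + 1)) :=
        fun p hp1 hp2 hp3 => hst p (L.nodes + 1) (anc_node.2 (Or.inl ⟨rfl, hp1, by omega⟩)) hp3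
      obtain ⟨e1, e2⟩ := splitAt_nodes S (L.nodes + 1) (by omega) hρ2
      have h0 := splitAt_lt hα w S o (L.nodes + 1) (by omega) (by omega) hρ2 hmax hr hstrict
      set S1 := (splitAt S (L.nodes + 1)).1 with hS1
      set S2 := (splitAt S (L.nodes + 1)).2 with hS2
      have hL : ip α w o S1 ≤ ip α w o L :=
        master_le hα w L S1 o (by omega) (by omega)
          (fun i j hij => hw i j (anc_node.2 (Or.inr (Or.inl hij))))
      have hR : ip α w (o + (L.nodes + 1)) S2 ≤ ip α w (o + (L.nodes + 1)) R :=
        master_le hα w R S2 (o + (L.nodes + 1)) (by omega) (by omega)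
          (fun i j hij => by
            have hb := anc_bounds R hij
            have := hw (L.nodes + 1 + i) (L.nodes + 1 + j) (anc_node.2 (Or.inr (Or.inr (by
              rw [show L.nodes + 1 + i - (L.nodes + 1) = i by omega,
                show L.nodes + 1 + j - (L.nodes + 1) = j by omega]
              exact hij))))
            rw [show o + (L.nodes + 1) + i = o + (L.nodes + 1 + i) by omega,
              show o + (L.nodes + 1) + j = o + (L.nodes + 1 + j) by omega]
            exact this)
      calc ip α w o S < ip α w o (node S1 S2) := h0
      _ ≤ ip α w o (node L S2) := ip_node_left_le (by omega) hL
      _ ≤ ip α w o (node L R) := ip_node_right_le (by omega) hR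

end
end LodayAux
namespace LodayAux
open PBTree Finset

lemma subMax_left {α w o} {L R : PBTree}
    (H : ∀ S, S.nodes = (node L R).nodes → ip α w o S ≤ ip α w o (node L R)) :
    ∀ S', S'.nodes = L.nodes → ip α w o S' ≤ ip α w o L := by
  intro S' h
  have := H (node S' R) (by simp [nodes, h])
  simp only [ip, val_node, h] at this
  linarith

lemma subMax_right {α w o} {L R : PBTree}
    (H : ∀ S, S.nodes = (node L R).nodes → ip α w o S ≤ ip α w o (node L R)) :
    ∀ S', S'.nodes = R.nodes →
      ip α w (o + (L.nodes + 1)) S' ≤ ip α w (o + (L.nodes + 1)) R := by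
  intro S' h
  have := H (node L S') (by simp [nodes, h])
  simp only [ip, val_node, h] at this
  linarith

section
variable {d : ℕ} {α : ℕ → ℝ} (hα : ∀ i j : ℕ, 1 ≤ i → i < j → j ≤ d + 1 → α i < α j)
include hα

lemma root_max (w : ℕ → ℝ) : ∀ (T : PBTree) (o : ℕ), T.nodes ≤ d + 1 →
    (∀ S, S.nodes = T.nodes → ip α w o S ≤ ip α w o T) →
    ∀ i, 1 ≤ i → i ≤ T.nodes → w (o + i) ≤ w (o + T.rootLabel)
  | leaf, o, _, _, i, h1, h2 => by simp [nodes] at h2; omega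
  | node L R, o, hsz, H, i, h1, h2 => by
    have hnn : (node L R).nodes = L.nodes + R.nodes + 1 := rfl
    have hrl : (node L R).rootLabel = L.nodes + 1 := rfl
    rw [hnn] at hsz h2
    rw [hrl]
    rcases Nat.lt_trichotomy i (L.nodes + 1) with h | h | h
    · -- i in left subtree
      cases L with
      | leaf => simp [nodes] at h; omega
      | node L1 L2 =>
        have hnL : (node L1 L2).nodes = L1.nodes + L2.nodes + 1 := rfl
        have ih := root_max w (node L1 L2) o (by omega) (subMax_left H) i h1 (by omega)
        have hrot := ip_rot α w o L1 L2 R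
        have hY := H (node L1 (node L2 R)) (by simp [nodes]; omega)
        have hc := cpos hα L1.nodes L2.nodes R.nodes (by omega)
        have hw2 : w (o + (L1.nodes + 1)) ≤ w (o + (L1.nodes + L2.nodes + 2)) := by nlinarith
        have e1 : L1.nodes + L2.nodes + 2 = (node L1 L2).nodes + 1 := by rw [hnL]
        rw [e1] at hw2
        have hrlL : (node L1 L2).rootLabel = L1.nodes + 1 := rfl
        rw [hrlL] at ih
        exact le_trans ih hw2
    · rw [h]
    · -- i in right subtree
      cases R with
      | leaf => simp [nodes] at h2; omega
      | node R1 R2 =>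
        have hnR : (node R1 R2).nodes = R1.nodes + R2.nodes + 1 := rfl
        have ih := root_max w (node R1 R2) (o + (L.nodes + 1)) (by omega) (subMax_right H)
          (i - (L.nodes + 1)) (by omega) (by omega)
        have hrlR : (node R1 R2).rootLabel = R1.nodes + 1 := rfl
        rw [hrlR, show o + (L.nodes + 1) + (i - (L.nodes + 1)) = o + i by omega,
          show o + (L.nodes + 1) + (R1.nodes + 1) = o + (L.nodes + R1.nodes + 2) by omega] at ih
        have hrot := ip_rot α w o L R1 R2
        have hX := H (node (node L R1) R2) (by simp [nodes]; omega)
        have hc := cpos hα L.nodes R1.nodes R2.nodes (by omega)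
        have hw2 : w (o + (L.nodes + R1.nodes + 2)) ≤ w (o + (L.nodes + 1)) := by nlinarith
        exact le_trans ih hw2

lemma cone_of_max (w : ℕ → ℝ) : ∀ (T : PBTree) (o : ℕ), T.nodes ≤ d + 1 →
    (∀ S, S.nodes = T.nodes → ip α w o S ≤ ip α w o T) →
    ∀ i j, anc T i j → w (o + i) ≤ w (o + j)
  | leaf, o, _, _, i, j, h => h.elim
  | node L R, o, hsz, H, i, j, hanc => by
    have hnn : (node L R).nodes = L.nodes + R.nodes + 1 := rfl
    rw [hnn] at hsz
    rcases anc_node.1 hanc with ⟨rfl, hi1, hi2⟩ | h | h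
    · have := root_max hα w (node L R) o (by omega) H i hi1 (by rw [hnn]; omega)
      rwa [show (node L R).rootLabel = L.nodes + 1 from rfl] at this
    · exact cone_of_max w L o (by omega) (subMax_left H) i j h
    · have hb := anc_bounds R h
      have := cone_of_max w R (o + (L.nodes + 1)) (by omega) (subMax_right H) _ _ h
      rwa [show o + (L.nodes + 1) + (i - (L.nodes + 1)) = o + i by omega,
        show o + (L.nodes + 1) + (j - (L.nodes + 1)) = o + j by omega] at this

end
end LodayAux
namespace LodayAux
open PBTree Finset

/-- depth of the node labeled `i` in the tree -/
def dep : PBTree → ℕ → ℕ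
  | leaf, _ => 0
  | node l r, i =>
      if i = l.nodes + 1 then 0
      else if i ≤ l.nodes then dep l i + 1
      else dep r (i - (l.nodes + 1)) + 1

lemma anc_dep : ∀ (T : PBTree) {i j : ℕ}, anc T i j → i ≠ j → dep T j < dep T i
  | leaf, i, j, h, _ => h.elim
  | node l r, i, j, h, hne => by
    rcases anc_node.1 h with ⟨rfl, hi1, hi2⟩ | h | h
    · rw [dep, if_pos rfl, dep]
      by_cases hc : i = l.nodes + 1
      · omega
      · rw [if_neg hc]
        split <;> omega
    · have hb := anc_bounds l h
      have ih := anc_dep l h hne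
      rw [dep, dep, if_neg (by omega), if_pos (by omega), if_neg (by omega), if_pos (by omega)]
      omega
    · have hb := anc_bounds r h
      have ih := anc_dep r h (by omega)
      rw [dep, dep, if_neg (by omega), if_neg (by omega), if_neg (by omega), if_neg (by omega)]
      omega

lemma subtreeAt_node_root (l r : PBTree) : subtreeAt (node l r) (l.nodes + 1) = node l r := by
  rw [subtreeAt, if_pos rfl]

lemma subtreeAt_node_left (l r : PBTree) {i : ℕ} (h : i ≤ l.nodes) :
    subtreeAt (node l r) i = subtreeAt l i := by
  rw [subtreeAt, if_neg (by omega), if_pos h]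

lemma subtreeAt_node_right (l r : PBTree) {i : ℕ} (h : l.nodes + 1 < i) :
    subtreeAt (node l r) i = subtreeAt r (i - (l.nodes + 1)) := by
  rw [subtreeAt, if_neg (by omega), if_neg (by omega)]

/-- shift reindexing for sums over `Ioc` -/
lemma sum_Ioc_shift (c t : ℕ) (g : ℕ → ℝ) :
    ∑ j ∈ Finset.Ioc c (c + t), g j = ∑ m ∈ Finset.Ioc 0 t, g (c + m) := by
  have h : Finset.Ioc c (c + t) = (Finset.Ioc 0 t).map (addLeftEmbedding c) := by
    rw [Finset.map_add_left_Ioc]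
    simp
  rw [h, Finset.sum_map]
  rfl

lemma ip_sum (α : ℕ → ℝ) (w : ℕ → ℝ) :
    ∀ (S : PBTree) (o : ℕ), ip α w o S = ∑ j ∈ Finset.Icc 1 S.nodes, w (o + j) * val α (S.subtreeAt j)
  | leaf, o => by simp [ip, nodes]
  | node l r, o => by
    have e : ∀ m : ℕ, Finset.Icc 1 m = Finset.Ioc 0 m := fun m => by
      ext x; simp [Finset.mem_Icc, Finset.mem_Ioc]; omega
    have hnn : (node l r).nodes = l.nodes + r.nodes + 1 := rfl
    rw [hnn, e]
    rw [← Finset.sum_Ioc_consecutive _ (by omega : 0 ≤ l.nodes + 1)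
        (by omega : l.nodes + 1 ≤ l.nodes + r.nodes + 1)]
    rw [← Finset.sum_Ioc_consecutive _ (by omega : 0 ≤ l.nodes)
        (by omega : l.nodes ≤ l.nodes + 1)]
    have h1 : ∑ j ∈ Finset.Ioc 0 l.nodes, w (o + j) * val α ((node l r).subtreeAt j)
        = ip α w o l := by
      rw [ip_sum α w l o, e]
      apply Finset.sum_congr rfl
      intro j hj
      simp only [Finset.mem_Ioc] at hj
      rw [subtreeAt_node_left l r (by omega)]
    have h2 : ∑ j ∈ Finset.Ioc l.nodes (l.nodes + 1), w (o + j) * val α ((node l r).subtreeAt j)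
        = w (o + (l.nodes + 1)) * val α (node l r) := by
      rw [show Finset.Ioc l.nodes (l.nodes + 1) = {l.nodes + 1} from by
        ext x; simp only [Finset.mem_Ioc, Finset.mem_singleton]; omega]
      rw [Finset.sum_singleton, subtreeAt_node_root]
    have h3 : ∑ j ∈ Finset.Ioc (l.nodes + 1) (l.nodes + r.nodes + 1),
          w (o + j) * val α ((node l r).subtreeAt j) = ip α w (o + (l.nodes + 1)) r := by
      rw [show l.nodes + r.nodes + 1 = (l.nodes + 1) + r.nodes by omega,
        sum_Ioc_shift (l.nodes + 1) r.nodes, ip_sum α w r (o + (l.nodes + 1)), e]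
      apply Finset.sum_congr rfl
      intro m hm
      simp only [Finset.mem_Ioc] at hm
      rw [subtreeAt_node_right l r (by omega),
        show l.nodes + 1 + m - (l.nodes + 1) = m by omega,
        show o + (l.nodes + 1 + m) = o + (l.nodes + 1) + m by omega]
    rw [h1, h2, h3, ip]

lemma ip_one (α : ℕ → ℝ) : ∀ (S : PBTree) (o : ℕ),
    ip α (fun _ => 1) o S = sA α S.nodes
  | leaf, _ => by simp [ip, nodes, sA]
  | node l r, o => by
    rw [ip, ip_one α l o, ip_one α r (o + (l.nodes + 1)), val_node,
      show (node l r).nodes = l.nodes + r.nodes + 1 from rfl]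
    ring

end LodayAux
namespace LodayAux
open PBTree Finset

def lcomb : ℕ → PBTree
  | 0 => leaf
  | m + 1 => node (lcomb m) leaf

def rcomb : ℕ → PBTree
  | 0 => leaf
  | m + 1 => node leaf (rcomb m)

@[simp] lemma nodes_lcomb : ∀ m, (lcomb m).nodes = m
  | 0 => rfl
  | m + 1 => by simp [lcomb, nodes, nodes_lcomb m]

@[simp] lemma nodes_rcomb : ∀ m, (rcomb m).nodes = m
  | 0 => rfl
  | m + 1 => by simp [rcomb, nodes, nodes_rcomb m]

lemma subtreeAt_lcomb : ∀ m j, 1 ≤ j → j ≤ m → (lcomb m).subtreeAt j = lcomb j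
  | 0, j, h1, h2 => by omega
  | m + 1, j, h1, h2 => by
    rcases Nat.lt_or_ge j (m + 1) with h | h
    · rw [lcomb, subtreeAt_node_left _ _ (by simp; omega), subtreeAt_lcomb m j h1 (by omega)]
    · have : j = m + 1 := by omega
      subst this
      rw [lcomb, show m + 1 = (lcomb m).nodes + 1 by simp, subtreeAt_node_root]

lemma subtreeAt_rcomb : ∀ m j, 1 ≤ j → j ≤ m → (rcomb m).subtreeAt j = rcomb (m + 1 - j)
  | 0, j, h1, h2 => by omega
  | m + 1, j, h1, h2 => by
    rcases Nat.lt_or_ge 1 j with h | h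
    · rw [rcomb, subtreeAt_node_right _ _ (by simp [nodes]; omega)]
      simp only [nodes]
      rw [show j - (0 + 1) = j - 1 by omega,
        subtreeAt_rcomb m (j - 1) (by omega) (by omega)]
      congr 1
      omega
    · have : j = 1 := by omega
      subst this
      rw [rcomb, show (1 : ℕ) = PBTree.leaf.nodes + 1 by simp [nodes], subtreeAt_node_root]
      congr 1

lemma val_lcomb (α : ℕ → ℝ) (j : ℕ) (h : 1 ≤ j) : val α (lcomb j) = α j := by
  obtain ⟨m, rfl⟩ : ∃ m, j = m + 1 := ⟨j - 1, by omega⟩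
  rw [lcomb, val_node]
  simp [sA_succ, sA_zero, nodes]

lemma val_rcomb (α : ℕ → ℝ) (j : ℕ) (h : 1 ≤ j) : val α (rcomb j) = α j := by
  obtain ⟨m, rfl⟩ : ∃ m, j = m + 1 := ⟨j - 1, by omega⟩
  rw [rcomb, val_node]
  simp only [nodes, nodes_rcomb]
  rw [show (0 : ℕ) + m + 1 = m + 1 by omega, sA_succ, sA_zero]
  ring

lemma fin_sum_Icc (n : ℕ) (f : ℕ → ℝ) : ∑ i : Fin n, f (i.1 + 1) = ∑ j ∈ Finset.Icc 1 n, f j := by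
  rw [Fin.sum_univ_eq_sum_range (fun i => f (i + 1)) n]
  induction n with
  | zero => simp
  | succ n ih => rw [Finset.sum_range_succ, ih, Finset.sum_Icc_succ_top (by omega)]

lemma loday_ip {d : ℕ} (α : ℕ → ℝ) (S : PBTree) (hS : S.nodes = d + 1) (W : ℕ → ℝ) :
    ∑ i : Fin (d + 1), W (i.1 + 1) * lodayVec (d + 1) α S i = ip α W 0 S := by
  rw [ip_sum α W S 0, hS, ← fin_sum_Icc (d + 1) (fun j => W (0 + j) * val α (S.subtreeAt j))]
  simp [lodayVec]

lemma vertex_sum {d : ℕ} (α : ℕ → ℝ) (S : PBTree) (hS : S.nodes = d + 1) :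
    ∑ i : Fin (d + 1), lodayVec (d + 1) α S i = sA α (d + 1) := by
  have := loday_ip α S hS (fun _ => 1)
  rw [ip_one α S 0, hS] at this
  simpa using this

/-- the fan trees realizing the edge directions -/
def Wt (d k : ℕ) : PBTree := node (lcomb k) (rcomb (d - k))

lemma Wt_nodes {d k : ℕ} (h : k ≤ d) : (Wt d k).nodes = d + 1 := by
  simp [Wt, nodes]
  omega

lemma lodayVec_Wt {d k : ℕ} (α : ℕ → ℝ) (h : k ≤ d) (i : Fin (d + 1)) :
    lodayVec (d + 1) α (Wt d k) i =
      if i.1 < k then α (i.1 + 1)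
      else if i.1 = k then sA α (d + 1) - sA α k - sA α (d - k)
      else α (d + 1 - i.1) := by
  have hi : i.1 ≤ d := by omega
  show val α ((Wt d k).subtreeAt (i.1 + 1)) = _
  unfold Wt
  by_cases h1 : i.1 < k
  · rw [subtreeAt_node_left _ _ (by simp; omega), subtreeAt_lcomb k (i.1 + 1) (by omega) (by omega),
      val_lcomb α (i.1 + 1) (by omega), if_pos h1]
  · by_cases h2 : i.1 = k
    · rw [show i.1 + 1 = (lcomb k).nodes + 1 by simp; omega, subtreeAt_node_root, val_node]
      simp only [nodes_lcomb, nodes_rcomb]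
      rw [show k + (d - k) + 1 = d + 1 by omega, if_neg h1, if_pos h2]
    · rw [subtreeAt_node_right _ _ (by simp; omega)]
      simp only [nodes_lcomb]
      rw [subtreeAt_rcomb (d - k) (i.1 + 1 - (k + 1)) (by omega) (by omega),
        show d - k + 1 - (i.1 + 1 - (k + 1)) = d + 1 - i.1 by omega,
        val_rcomb α (d + 1 - i.1) (by omega), if_neg h1, if_neg h2]

lemma Wt_diff {d k : ℕ} (α : ℕ → ℝ) (hk : k < d) (i : Fin (d + 1)) :
    lodayVec (d + 1) α (Wt d (k + 1)) i - lodayVec (d + 1) α (Wt d k) i =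
      (sA α (d + 1) - sA α (k + 1) - sA α (d - k)) *
        ((if i.1 = k + 1 then 1 else 0) - (if i.1 = k then 1 else 0)) := by
  rw [lodayVec_Wt α (by omega), lodayVec_Wt α (by omega)]
  rcases Nat.lt_trichotomy i.1 k with h | h | h
  · rw [if_pos (by omega : i.1 < k + 1), if_pos h, if_neg (by omega), if_neg (by omega)]
    ring
  · rw [if_pos (by omega : i.1 < k + 1), if_neg (by omega), if_pos h, if_neg (by omega),
      if_pos h, show (i.1 : ℕ) + 1 = k + 1 by omega, show sA α (k + 1) = sA α k + α (k + 1) from sA_succ α k]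
    ring
  · by_cases h3 : i.1 = k + 1
    · have e : sA α (d - k) = sA α (d - (k + 1)) + α (d - k) := by
        rw [show d - k = (d - (k + 1)) + 1 by omega, sA_succ,
          show d - (k + 1) + 1 = d - k by omega]
      rw [if_neg (by omega), if_pos h3, if_neg (by omega), if_neg (by omega), if_pos h3,
        if_neg (by omega), show d + 1 - i.1 = d - k by omega, e]
      ring
    · rw [if_neg (by omega), if_neg h3, if_neg (by omega), if_neg (by omega), if_neg h3,
        if_neg (by omega)]
      ring

lemma delta_pos {d : ℕ} {α : ℕ → ℝ} (hα : ∀ i j : ℕ, 1 ≤ i → i < j → j ≤ d + 1 → α i < α j)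
    {k : ℕ} (hk : k < d) : 0 < sA α (d + 1) - sA α (k + 1) - sA α (d - k) := by
  have := sA_add_lt hα (d - k) (by omega) 0 (k + 1) (by omega) (by omega)
  rw [Nat.zero_add, show k + 1 + (d - k) = d + 1 by omega, sA_zero] at this
  linarith

end LodayAux
namespace LodayAux
open PBTree Finset

variable {d : ℕ}

lemma f_lin (w x y : Fin (d + 1) → ℝ) (a b : ℝ) :
    ∑ i, w i * (a • x + b • y) i = a * (∑ i, w i * x i) + b * ∑ i, w i * y i := by
  rw [Finset.mul_sum, Finset.mul_sum, ← Finset.sum_add_distrib]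
  exact Finset.sum_congr rfl fun i _ => by
    simp only [Pi.add_apply, Pi.smul_apply, smul_eq_mul]
    ring

lemma hull_le {V : Set (Fin (d + 1) → ℝ)} (w : Fin (d + 1) → ℝ) (M : ℝ)
    (hv : ∀ x ∈ V, ∑ i, w i * x i ≤ M) :
    ∀ p ∈ convexHull ℝ V, ∑ i, w i * p i ≤ M := by
  intro p hp
  have hconv : Convex ℝ {x : Fin (d + 1) → ℝ | ∑ i, w i * x i ≤ M} := by
    intro x hx y hy a b ha hb hab
    simp only [Set.mem_setOf_eq] at hx hy ⊢
    rw [f_lin]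
    have hM : a * M + b * M = M := by rw [← add_mul, hab, one_mul]
    nlinarith [mul_le_mul_of_nonneg_left hx ha, mul_le_mul_of_nonneg_left hy hb]
  exact convexHull_min hv hconv hp

lemma hull_eq_of_strict {V : Set (Fin (d + 1) → ℝ)} (w : Fin (d + 1) → ℝ)
    (v : Fin (d + 1) → ℝ)
    (hstrict : ∀ x ∈ V, x ≠ v → ∑ i, w i * x i < ∑ i, w i * v i) :
    ∀ p ∈ convexHull ℝ V, (∑ i, w i * p i = ∑ i, w i * v i) → p = v := by
  intro p hp hfp
  rw [_root_.convexHull_eq] at hp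
  obtain ⟨ι, t, μ, z, hμ0, hμ1, hz, hcm⟩ := hp
  have hp' : p = ∑ i ∈ t, μ i • z i := by
    rw [← hcm, Finset.centerMass, hμ1, inv_one, one_smul]
  have hg : ∀ x ∈ V, ∑ i, w i * x i ≤ ∑ i, w i * v i := by
    intro x hx
    by_cases h : x = v
    · rw [h]
    · exact (hstrict x hx h).le
  have hswap : ∑ j, w j * p j = ∑ i ∈ t, μ i * ∑ j, w j * z i j := by
    rw [hp']
    calc ∑ j, w j * (∑ i ∈ t, μ i • z i) j
        = ∑ j, ∑ i ∈ t, μ i * (w j * z i j) := by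
          refine Finset.sum_congr rfl fun j _ => ?_
          rw [Finset.sum_apply, Finset.mul_sum]
          exact Finset.sum_congr rfl fun i _ => by
            simp only [Pi.smul_apply, smul_eq_mul]; ring
      _ = ∑ i ∈ t, ∑ j, μ i * (w j * z i j) := Finset.sum_comm
      _ = ∑ i ∈ t, μ i * ∑ j, w j * z i j := by
          exact Finset.sum_congr rfl fun i _ => by rw [Finset.mul_sum]
  have key : ∑ i ∈ t, μ i * ((∑ j, w j * v j) - ∑ j, w j * z i j) = 0 := by
    have h1 : ∑ i ∈ t, μ i * (∑ j, w j * v j) = ∑ j, w j * v j := by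
      rw [← Finset.sum_mul, hμ1, one_mul]
    calc ∑ i ∈ t, μ i * ((∑ j, w j * v j) - ∑ j, w j * z i j)
        = (∑ i ∈ t, μ i * (∑ j, w j * v j)) - ∑ i ∈ t, μ i * ∑ j, w j * z i j := by
          rw [← Finset.sum_sub_distrib]
          exact Finset.sum_congr rfl fun i _ => by ring
      _ = 0 := by rw [h1, ← hswap, hfp]; ring
  have keyterm : ∀ i ∈ t, μ i * ((∑ j, w j * v j) - ∑ j, w j * z i j) = 0 :=
    (Finset.sum_eq_zero_iff_of_nonneg (fun i hi =>
      mul_nonneg (hμ0 i hi) (sub_nonneg.2 (hg (z i) (hz i hi))))).1 key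
  have hzv : ∀ i ∈ t, μ i • z i = μ i • v := by
    intro i hi
    rcases eq_or_ne (μ i) 0 with h0 | h0
    · rw [h0, zero_smul, zero_smul]
    · have h1 : (∑ j, w j * v j) - ∑ j, w j * z i j = 0 := by
        rcases mul_eq_zero.1 (keyterm i hi) with h | h
        · exact absurd h h0
        · exact h
      have h2 : z i = v := by
        by_contra hne
        have := hstrict (z i) (hz i hi) hne
        linarith
      rw [h2]
  rw [hp', Finset.sum_congr rfl hzv, ← Finset.sum_smul, hμ1, one_smul]

lemma extreme_of_strict {V : Set (Fin (d + 1) → ℝ)} (w : Fin (d + 1) → ℝ)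
    (v : Fin (d + 1) → ℝ) (hv : v ∈ V)
    (hstrict : ∀ x ∈ V, x ≠ v → ∑ i, w i * x i < ∑ i, w i * v i) :
    v ∈ Set.extremePoints ℝ (convexHull ℝ V) := by
  have hg : ∀ x ∈ V, ∑ i, w i * x i ≤ ∑ i, w i * v i := by
    intro x hx
    by_cases h : x = v
    · rw [h]
    · exact (hstrict x hx h).le
  have hb := hull_le w _ hg
  refine ⟨subset_convexHull ℝ V hv, ?_⟩
  intro x₁ h₁ x₂ h₂ hseg
  obtain ⟨a, b, ha, hb', hab, hsum⟩ := hseg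
  have e1 : ∑ i, w i * v i = a * (∑ i, w i * x₁ i) + b * ∑ i, w i * x₂ i := by
    rw [← hsum, f_lin]
  have hv1 : a * (∑ i, w i * v i) + b * (∑ i, w i * v i) = ∑ i, w i * v i := by
    rw [← add_mul, hab, one_mul]
  have hf1 : ∑ i, w i * x₁ i = ∑ i, w i * v i := by
    refine le_antisymm (hb x₁ h₁) ?_
    nlinarith [mul_le_mul_of_nonneg_left (hb x₂ h₂) hb'.le, hv1]
  have hf2 : ∑ i, w i * x₂ i = ∑ i, w i * v i := by
    refine le_antisymm (hb x₂ h₂) ?_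
    nlinarith [mul_le_mul_of_nonneg_left (hb x₁ h₁) ha.le, hv1]
  exact hull_eq_of_strict w v hstrict x₁ h₁ hf1

end LodayAux
namespace LodayAux
open PBTree Finset

variable {d : ℕ} {α : ℕ → ℝ}

/-- extension of a weight vector on `Fin (d+1)` to `ℕ` (1-based) -/
def ext (d : ℕ) (w : Fin (d + 1) → ℝ) : ℕ → ℝ :=
  fun k => if h : k - 1 < d + 1 then w ⟨k - 1, h⟩ else 0

lemma ext_fin (w : Fin (d + 1) → ℝ) (i : Fin (d + 1)) : ext d w (i.1 + 1) = w i := by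
  simp [ext]
  intro h
  exact absurd i.2 (by omega)

lemma ext_nat (w : Fin (d + 1) → ℝ) {k : ℕ} (h1 : 1 ≤ k) (h2 : k ≤ d + 1) :
    ext d w k = w ⟨k - 1, by omega⟩ := dif_pos (by omega)

lemma ipb (w : Fin (d + 1) → ℝ) (S : PBTree) (hS : S.nodes = d + 1) :
    ∑ i, w i * lodayVec (d + 1) α S i = ip α (ext d w) 0 S := by
  rw [← loday_ip α S hS (ext d w)]
  exact Finset.sum_congr rfl fun i _ => by rw [ext_fin]

/-- the strict weight vector associated to a tree (negated depths) -/
def wdep (d : ℕ) (T : PBTree) : Fin (d + 1) → ℝ := fun i => -(dep T (i.1 + 1) : ℝ)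

section
variable (hα : ∀ i j : ℕ, 1 ≤ i → i < j → j ≤ d + 1 → α i < α j)
include hα

lemma vertex_le (T S : PBTree) (hT : T.nodes = d + 1) (hS : S.nodes = d + 1)
    (w : Fin (d + 1) → ℝ) (hw : ∀ i j : Fin (d + 1), anc T (i.1 + 1) (j.1 + 1) → w i ≤ w j) :
    ∑ i, w i * lodayVec (d + 1) α S i ≤ ∑ i, w i * lodayVec (d + 1) α T i := by
  rw [ipb w S hS, ipb w T hT]
  apply master_le hα (ext d w) T S 0 (by omega) (by omega)
  intro i j hanc
  have hb := anc_bounds T hanc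
  rw [hT] at hb
  rw [Nat.zero_add, Nat.zero_add, ext_nat w (by omega) (by omega),
    ext_nat w (by omega) (by omega)]
  apply hw
  rwa [show i - 1 + 1 = i by omega, show j - 1 + 1 = j by omega]

omit hα in
lemma wdep_strict (T : PBTree) (hT : T.nodes = d + 1) :
    ∀ i j, anc T i j → i ≠ j → ext d (wdep d T) (0 + i) < ext d (wdep d T) (0 + j) := by
  intro i j hanc hne
  have hb := anc_bounds T hanc
  rw [hT] at hb
  rw [Nat.zero_add, Nat.zero_add, ext_nat _ (by omega) (by omega),
    ext_nat _ (by omega) (by omega)]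
  show -(dep T (i - 1 + 1) : ℝ) < -(dep T (j - 1 + 1) : ℝ)
  rw [show i - 1 + 1 = i by omega, show j - 1 + 1 = j by omega]
  exact neg_lt_neg (Nat.cast_lt.2 (anc_dep T hanc hne))

lemma vertex_lt (T S : PBTree) (hT : T.nodes = d + 1) (hS : S.nodes = d + 1) (hne : S ≠ T) :
    ∑ i, wdep d T i * lodayVec (d + 1) α S i < ∑ i, wdep d T i * lodayVec (d + 1) α T i := by
  rw [ipb (wdep d T) S hS, ipb (wdep d T) T hT]
  exact master_lt hα (ext d (wdep d T)) T S 0 (by omega) (by omega) hne (wdep_strict T hT)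

lemma cone_back (T : PBTree) (hT : T.nodes = d + 1) (w : Fin (d + 1) → ℝ)
    (H : ∀ S : PBTree, S.nodes = d + 1 →
      ∑ i, w i * lodayVec (d + 1) α S i ≤ ∑ i, w i * lodayVec (d + 1) α T i) :
    ∀ i j : Fin (d + 1), anc T (i.1 + 1) (j.1 + 1) → w i ≤ w j := by
  intro i j hanc
  have key := cone_of_max hα (ext d w) T 0 (by omega)
    (fun S hS => by
      rw [← ipb w S (by rw [hS, hT]), ← ipb w T hT]
      exact H S (by rw [hS, hT]))
    (i.1 + 1) (j.1 + 1) hanc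
  rwa [Nat.zero_add, Nat.zero_add, ext_fin, ext_fin] at key

end

/-- the hyperplane `∑ x i = c` as an affine subspace -/
noncomputable def hyper (d : ℕ) (c : ℝ) : AffineSubspace ℝ (Fin (d + 1) → ℝ) where
  carrier := {x | ∑ i, x i = c}
  smul_vsub_vadd_mem' := by
    intro t p1 p2 p3 h1 h2 h3
    simp only [Set.mem_setOf_eq] at h1 h2 h3 ⊢
    have : ∀ i, (t • (p1 -ᵥ p2) +ᵥ p3) i = t * (p1 i - p2 i) + p3 i := fun i => rfl
    rw [Finset.sum_congr rfl fun i _ => this i, Finset.sum_add_distrib]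
    have e : ∑ i, t * (p1 i - p2 i) = t * ((∑ i, p1 i) - ∑ i, p2 i) := by
      rw [← Finset.mul_sum]
      congr 1
      rw [Finset.sum_sub_distrib]
    rw [e, h1, h2, h3]
    ring

end LodayAux

/-- Proposition 4.10: for strictly increasing `α ∈ ℝ^{d+1}`, the points `v_T^α` are pairwise
distinct and are exactly the extreme points of `LodAsso(α)`, the affine span of `LodAsso(α)` is
the hyperplane `Σ x_i = Σ α_i`, and the normal cone of `LodAsso(α)` at `v_T^α` is the cone
`{w : w_i ≤ w_j whenever i ≼_T j}`. -/
theorem loday_associahedron (d : ℕ) (α : ℕ → ℝ)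
    (hα : ∀ i j : ℕ, 1 ≤ i → i < j → j ≤ d + 1 → α i < α j) :
    (∀ T T' : PBTree, T.nodes = d + 1 → T'.nodes = d + 1 →
        lodayVec (d + 1) α T = lodayVec (d + 1) α T' → T = T') ∧
    Set.extremePoints ℝ (convexHull ℝ (lodayVerts d α)) = lodayVerts d α ∧
    (affineSpan ℝ (convexHull ℝ (lodayVerts d α)) : Set (Fin (d + 1) → ℝ))
      = {x | (∑ i, x i) = ∑ k ∈ Finset.Icc 1 (d + 1), α k} ∧
    ∀ T : PBTree, T.nodes = d + 1 →
      {w : Fin (d + 1) → ℝ | ∀ p ∈ convexHull ℝ (lodayVerts d α),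
          (∑ i, w i * p i) ≤ ∑ i, w i * lodayVec (d + 1) α T i}
        = {w | ∀ i j : Fin (d + 1), T.anc (i.1 + 1) (j.1 + 1) → w i ≤ w j} := by
  refine ⟨?_, ?_, ?_, ?_⟩
  · -- injectivity
    intro T T' hT hT' heq
    by_contra hne
    have hlt := LodayAux.vertex_lt hα T T' hT hT' (fun h => hne h.symm)
    rw [heq] at hlt
    exact lt_irrefl _ hlt
  · -- extreme points
    apply Set.Subset.antisymm
    · exact extremePoints_convexHull_subset
    · rintro x ⟨T, hT, rfl⟩
      refine LodayAux.extreme_of_strict (LodayAux.wdep d T) (lodayVec (d + 1) α T) ⟨T, hT, rfl⟩ ?_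
      rintro z ⟨S, hS, rfl⟩ hne
      exact LodayAux.vertex_lt hα T S hT hS (fun h => hne (by rw [h]))
  · -- affine span
    rw [affineSpan_convexHull]
    apply Set.Subset.antisymm
    · have hle : affineSpan ℝ (lodayVerts d α) ≤ LodayAux.hyper d (LodayAux.sA α (d + 1)) := by
        rw [affineSpan_le]
        rintro z ⟨S, hS, rfl⟩
        exact LodayAux.vertex_sum α S hS
      intro x hx
      exact hle hx
    · rintro x hx
      simp only [Set.mem_setOf_eq] at hx
      rw [show (∑ k ∈ Finset.Icc 1 (d + 1), α k) = LodayAux.sA α (d + 1) from rfl] at hx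
      have hWspan : ∀ k, k ≤ d →
          lodayVec (d + 1) α (LodayAux.Wt d k) ∈ affineSpan ℝ (lodayVerts d α) :=
        fun k hk => subset_affineSpan ℝ _ ⟨LodayAux.Wt d k, LodayAux.Wt_nodes hk, rfl⟩
      set v0 := lodayVec (d + 1) α (LodayAux.Wt d 0) with hv0
      set y : Fin (d + 1) → ℝ := fun i => x i - v0 i with hy
      set Y : ℕ → ℝ := fun j => if h : j < d + 1 then y ⟨j, h⟩ else 0 with hY
      set C : ℕ → ℝ := fun k => ∑ j ∈ Finset.range (k + 1), Y j with hC
      have hsum0 : ∑ j ∈ Finset.range (d + 1), Y j = 0 := by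
        have e1 : ∑ j ∈ Finset.range (d + 1), Y j = ∑ i : Fin (d + 1), y i := by
          rw [← Fin.sum_univ_eq_sum_range Y (d + 1)]
          exact Finset.sum_congr rfl fun i _ => by simp [hY]; intro h; exact absurd i.2 (by omega)
        have e2 : ∑ i : Fin (d + 1), y i = (∑ i, x i) - ∑ i, v0 i :=
          Finset.sum_sub_distrib _ _
        rw [e1, e2, hx, hv0, LodayAux.vertex_sum α (LodayAux.Wt d 0) (LodayAux.Wt_nodes (Nat.zero_le d))]
        ring
      have hymem : y ∈ (affineSpan ℝ (lodayVerts d α)).direction := by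
        have hrep : y = ∑ k ∈ Finset.range d,
            (-C k / (LodayAux.sA α (d + 1) - LodayAux.sA α (k + 1) - LodayAux.sA α (d - k))) •
              (lodayVec (d + 1) α (LodayAux.Wt d (k + 1)) - lodayVec (d + 1) α (LodayAux.Wt d k)) := by
          funext i
          rw [Finset.sum_apply]
          have hterm : ∀ k ∈ Finset.range d,
              ((-C k / (LodayAux.sA α (d + 1) - LodayAux.sA α (k + 1) - LodayAux.sA α (d - k))) •
                (lodayVec (d + 1) α (LodayAux.Wt d (k + 1)) - lodayVec (d + 1) α (LodayAux.Wt d k))) i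
              = C k * (if i.1 = k then 1 else 0) - C k * (if i.1 = k + 1 then 1 else 0) := by
            intro k hk
            rw [Finset.mem_range] at hk
            have hδ : (0:ℝ) < LodayAux.sA α (d + 1) - LodayAux.sA α (k + 1) - LodayAux.sA α (d - k) := LodayAux.delta_pos hα hk
            have hδ' : LodayAux.sA α (d + 1) - LodayAux.sA α (k + 1) - LodayAux.sA α (d - k) ≠ 0 := ne_of_gt hδ
            simp only [Pi.smul_apply, Pi.sub_apply, smul_eq_mul]
            have key : ∀ e : ℝ,
                (-C k / (LodayAux.sA α (d + 1) - LodayAux.sA α (k + 1) - LodayAux.sA α (d - k))) *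
                  ((LodayAux.sA α (d + 1) - LodayAux.sA α (k + 1) - LodayAux.sA α (d - k)) * e) = C k * -e := by
              intro e
              field_simp
            rw [LodayAux.Wt_diff α hk i, key]
            ring
          rw [Finset.sum_congr rfl hterm, Finset.sum_sub_distrib]
          have hA : ∑ k ∈ Finset.range d, C k * (if i.1 = k then 1 else 0)
              = if i.1 < d then C i.1 else 0 := by
            rw [Finset.sum_congr rfl (fun k _ => by rw [mul_ite, mul_one, mul_zero]),
              Finset.sum_ite_eq]
            simp [Finset.mem_range]
          have hB : ∑ k ∈ Finset.range d, C k * (if i.1 = k + 1 then 1 else 0)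
              = if 1 ≤ i.1 then C (i.1 - 1) else 0 := by
            by_cases h0 : i.1 = 0
            · rw [if_neg (by omega)]
              apply Finset.sum_eq_zero
              intro k _
              rw [if_neg (by omega), mul_zero]
            · rw [if_pos (by omega)]
              have he : ∀ k ∈ Finset.range d, C k * (if i.1 = k + 1 then 1 else 0)
                  = if i.1 - 1 = k then C k else 0 := by
                intro k _
                by_cases hk : i.1 = k + 1
                · rw [if_pos hk, if_pos (by omega), mul_one]
                · rw [if_neg hk, if_neg (by omega), mul_zero]
              rw [Finset.sum_congr rfl he, Finset.sum_ite_eq]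
              have hin : i.1 - 1 ∈ Finset.range d := by
                rw [Finset.mem_range]
                omega
              rw [if_pos hin]
          rw [hA, hB]
          have hyY : y i = Y i.1 := by simp [hY]; intro h; exact absurd i.2 (by omega)
          rw [hyY]
          by_cases hd : i.1 < d
          · rw [if_pos hd]
            by_cases h0 : 1 ≤ i.1
            · rw [if_pos h0]
              simp only [hC]
              rw [show i.1 - 1 + 1 = i.1 by omega, Finset.sum_range_succ]
              ring
            · rw [if_neg h0]
              simp only [hC]
              rw [show i.1 = 0 by omega, Finset.sum_range_one]
              ring
          · have hid : i.1 = d := by omega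
            rw [if_neg hd]
            by_cases h0 : 1 ≤ i.1
            · rw [if_pos h0]
              simp only [hC]
              rw [show i.1 - 1 + 1 = d by omega]
              rw [Finset.sum_range_succ] at hsum0
              rw [hid]
              linarith
            · rw [if_neg h0]
              rw [show i.1 = 0 by omega]
              have : d = 0 := by omega
              rw [this, Finset.sum_range_one] at hsum0
              linarith
        rw [hrep]
        apply Submodule.sum_mem
        intro k hk
        rw [Finset.mem_range] at hk
        apply Submodule.smul_mem
        exact AffineSubspace.vsub_mem_direction (hWspan (k + 1) (by omega))
          (hWspan k (by omega))
      have hxy : x = y +ᵥ v0 := by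
        funext i
        show x i = y i + v0 i
        simp [hy]
      rw [hxy]
      exact AffineSubspace.vadd_mem_of_mem_direction hymem (hWspan 0 (Nat.zero_le d))
  · -- normal cones
    intro T hT
    ext w
    simp only [Set.mem_setOf_eq]
    constructor
    · intro H
      exact LodayAux.cone_back hα T hT w
        (fun S hS => H _ (subset_convexHull ℝ _ ⟨S, hS, rfl⟩))
    · intro hw p hp
      refine LodayAux.hull_le w _ ?_ p hp
      rintro z ⟨S, hS, rfl⟩
      exact LodayAux.vertex_le hα T S hT hS w hw
end

section
/- Let α = (α_1,…,α_{d+1}) ∈ ℝ^{d+1} be strictly increasing, and set δ_k := α_k − α_{k−1} for k = 1,…,d+1 (with the convention α_0 = 0). Then convexHull{ v_T^α : T a plane binary tree with d+1 internal nodes } = δ_{d+1}·Δ_{[d+1]} + Σ_{I} δ_{|I|}·Δ_I, where the (Minkowski) sum runs over all integer intervals I with ∅ ≠ I ⊊ [d+1], and Δ_I := convexHull{ e_i : i ∈ I } ⊆ ℝ^{d+1} with e_1,…,e_{d+1} the standard basis. -/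
open scoped Pointwise

/-- The simplex `Δ_I = conv{e_i : i ∈ I}` for the integer interval `I = {a,…,b} ⊆ [d+1]`
(labels are 1-based; coordinate `i : Fin (d+1)` has label `i+1`). -/
def intervalSimplex (d a b : ℕ) : Set (Fin (d + 1) → ℝ) :=
  convexHull ℝ {x | ∃ i : Fin (d + 1), (a ≤ i.1 + 1 ∧ i.1 + 1 ≤ b) ∧ x = Pi.single i 1}

/-! ### Auxiliary development for `loday_minkowski` -/

namespace PBTree

/-- The label of the root of the minimal subtree containing the label interval `[a, b]`. -/
def iroot : PBTree → ℕ → ℕ → ℕ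
  | leaf, _, _ => 0
  | node l r, a, b =>
      if a ≤ l.nodes + 1 ∧ l.nodes + 1 ≤ b then l.nodes + 1
      else if b ≤ l.nodes then iroot l a b
      else l.nodes + 1 + iroot r (a - (l.nodes + 1)) (b - (l.nodes + 1))

lemma iroot_mem (T : PBTree) : ∀ a b, 1 ≤ a → a ≤ b → b ≤ T.nodes →
    a ≤ iroot T a b ∧ iroot T a b ≤ b := by
  induction T with
  | leaf => intro a b h1 h2 h3; simp [nodes] at h3; omega
  | node l r ihl ihr =>
    intro a b h1 h2 h3
    simp only [nodes] at h3
    rw [iroot]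
    by_cases hc : a ≤ l.nodes + 1 ∧ l.nodes + 1 ≤ b
    · rw [if_pos hc]; omega
    · rw [if_neg hc]
      by_cases hb : b ≤ l.nodes
      · rw [if_pos hb]; exact ihl a b h1 h2 hb
      · rw [if_neg hb]
        have := ihr (a - (l.nodes + 1)) (b - (l.nodes + 1)) (by omega) (by omega) (by omega)
        omega

lemma iroot_node_mid {l r : PBTree} {a b : ℕ} (h : a ≤ l.nodes + 1 ∧ l.nodes + 1 ≤ b) :
    iroot (node l r) a b = l.nodes + 1 := by rw [iroot, if_pos h]

lemma iroot_node_left {l r : PBTree} {a b : ℕ} (h : b ≤ l.nodes) :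
    iroot (node l r) a b = iroot l a b := by
  rw [iroot, if_neg (by omega), if_pos h]

lemma iroot_node_right {l r : PBTree} {a b : ℕ} (h : l.nodes + 1 < a) (hab : a ≤ b) :
    iroot (node l r) a b = l.nodes + 1 + iroot r (a - (l.nodes + 1)) (b - (l.nodes + 1)) := by
  rw [iroot, if_neg (by omega), if_neg (by omega)]

lemma iroot_cases {l r : PBTree} {a b i : ℕ} (h1 : 1 ≤ a) (hab : a ≤ b)
    (hb : b ≤ l.nodes + r.nodes + 1) (hi : iroot (node l r) a b = i) :
    (a ≤ l.nodes + 1 ∧ l.nodes + 1 ≤ b ∧ i = l.nodes + 1)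
    ∨ (b ≤ l.nodes ∧ iroot l a b = i ∧ i ≤ l.nodes)
    ∨ (l.nodes + 1 < a ∧ iroot r (a - (l.nodes + 1)) (b - (l.nodes + 1)) = i - (l.nodes + 1)
        ∧ l.nodes + 1 < i) := by
  by_cases hc : a ≤ l.nodes + 1 ∧ l.nodes + 1 ≤ b
  · left; rw [iroot_node_mid hc] at hi; exact ⟨hc.1, hc.2, hi.symm⟩
  · by_cases hbl : b ≤ l.nodes
    · right; left
      rw [iroot_node_left hbl] at hi
      have := iroot_mem l a b h1 hab hbl
      exact ⟨hbl, hi, by omega⟩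
    · right; right
      have ha : l.nodes + 1 < a := by omega
      rw [iroot_node_right ha hab] at hi
      have := iroot_mem r (a - (l.nodes + 1)) (b - (l.nodes + 1)) (by omega) (by omega) (by omega)
      exact ⟨ha, by omega, by omega⟩

lemma finite_nodes_eq : ∀ n : ℕ, {T : PBTree | T.nodes = n}.Finite := by
  intro n
  induction n using Nat.strong_induction_on with
  | _ n ih =>
    match n with
    | 0 =>
      apply Set.Finite.subset (Set.finite_singleton leaf)
      rintro T hT
      cases T with
      | leaf => simp
      | node l r => simp [nodes] at hT
    | n + 1 =>
      apply Set.Finite.subset (Set.Finite.biUnion (Set.finite_Icc 0 n)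
        (fun a (ha : a ∈ Set.Icc 0 n) => Set.Finite.image2 node
          (ih a (by have := ha.2; omega)) (ih (n - a) (by have := ha.2; omega))))
      rintro T hT
      cases T with
      | leaf => simp [nodes] at hT
      | node l r =>
        simp only [Set.mem_setOf_eq, nodes] at hT
        refine Set.mem_biUnion (show l.nodes ∈ Set.Icc 0 n by
          simp only [Set.mem_Icc]; omega) ?_
        exact Set.mem_image2_of_mem rfl (by simp only [Set.mem_setOf_eq]; omega)

/-- position of a maximum of `w` on `[1, n]` -/
noncomputable def amax (w : ℕ → ℝ) : ℕ → ℕ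
  | 0 => 0
  | n + 1 => if n = 0 then 1 else if w (amax w n) < w (n + 1) then n + 1 else amax w n

lemma amax_mem (w : ℕ → ℝ) : ∀ n, 1 ≤ n → 1 ≤ amax w n ∧ amax w n ≤ n := by
  intro n
  induction n with
  | zero => omega
  | succ n ih =>
    intro _
    rw [amax]
    rcases Nat.eq_zero_or_pos n with h0 | h0
    · rw [if_pos h0]; omega
    · rw [if_neg (by omega)]
      have := ih (by omega)
      split <;> omega

lemma amax_spec (w : ℕ → ℝ) : ∀ n, ∀ k, 1 ≤ k → k ≤ n → w k ≤ w (amax w n) := by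
  intro n
  induction n with
  | zero => omega
  | succ n ih =>
    intro k hk1 hk2
    rw [amax]
    rcases Nat.eq_zero_or_pos n with h0 | h0
    · rw [if_pos h0]
      have : k = 1 := by omega
      rw [this]
    · rw [if_neg (by omega)]
      by_cases h : w (amax w n) < w (n + 1)
      · rw [if_pos h]
        rcases Nat.lt_or_ge k (n + 1) with h2 | h2
        · exact le_trans (ih k hk1 (by omega)) (le_of_lt h)
        · have : k = n + 1 := by omega
          rw [this]
      · rw [if_neg h]
        rcases Nat.lt_or_ge k (n + 1) with h2 | h2
        · exact ih k hk1 (by omega)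
        · have : k = n + 1 := by omega
          rw [this]; exact not_lt.mp h

/-- greedy tree on labels `1..n` for weight `w`, with fuel -/
noncomputable def gt' : ℕ → (ℕ → ℝ) → ℕ → PBTree
  | 0, _, _ => leaf
  | _ + 1, _, 0 => leaf
  | fuel + 1, w, n + 1 =>
      node (gt' fuel w (amax w (n + 1) - 1))
        (gt' fuel (fun k => w (k + amax w (n + 1))) (n + 1 - amax w (n + 1)))

lemma gt'_nodes : ∀ fuel n, n ≤ fuel → ∀ w : ℕ → ℝ, (gt' fuel w n).nodes = n := by
  intro fuel
  induction fuel with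
  | zero => intro n hn w; interval_cases n; simp [gt', nodes]
  | succ fuel ih =>
    intro n hn w
    match n with
    | 0 => simp [gt', nodes]
    | n + 1 =>
      have hm := amax_mem w (n + 1) (by omega)
      rw [gt']
      simp only [nodes]
      rw [ih _ (by omega), ih _ (by omega)]
      omega

lemma gt'_greedy : ∀ fuel n, n ≤ fuel → ∀ w : ℕ → ℝ, ∀ a b, 1 ≤ a → a ≤ b → b ≤ n →
    ∀ k, a ≤ k → k ≤ b → w k ≤ w (iroot (gt' fuel w n) a b) := by
  intro fuel
  induction fuel with
  | zero => intro n hn w a b ha hab hbn; omega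
  | succ fuel ih =>
    intro n hn w a b ha hab hbn k hk1 hk2
    match n with
    | 0 => omega
    | n + 1 =>
      have hm := amax_mem w (n + 1) (by omega)
      set m := amax w (n + 1) with hmdef
      rw [gt']
      set l := gt' fuel w (m - 1) with hl
      set r := gt' fuel (fun k => w (k + m)) (n + 1 - m) with hr
      have hln : l.nodes = m - 1 := gt'_nodes fuel _ (by omega) _
      have hrn : r.nodes = n + 1 - m := gt'_nodes fuel _ (by omega) _
      have hm1 : m - 1 + 1 = m := by omega
      by_cases hc : a ≤ m ∧ m ≤ b
      · have hre : iroot (node l r) a b = m := by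
          rw [iroot, hln, hm1, if_pos hc]
        rw [hre]
        exact amax_spec w (n + 1) k (by omega) (by omega)
      · by_cases hbl : b ≤ m - 1
        · have hre : iroot (node l r) a b = iroot l a b := by
            rw [iroot, hln, hm1, if_neg hc, if_pos hbl]
          rw [hre]
          exact ih (m - 1) (by omega) w a b ha hab hbl k hk1 hk2
        · have haa : m < a := by omega
          have hre : iroot (node l r) a b = m + iroot r (a - m) (b - m) := by
            rw [iroot, hln, hm1, if_neg hc, if_neg (by omega)]
          rw [hre]
          have := ih (n + 1 - m) (by omega) (fun k => w (k + m)) (a - m) (b - m)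
            (by omega) (by omega) (by omega) (k - m) (by omega) (by omega)
          have e1 : k - m + m = k := by omega
          have e2 : iroot r (a - m) (b - m) + m = m + iroot r (a - m) (b - m) := by omega
          rw [e1, e2] at this
          exact this

end PBTree

section SumLemmas

lemma inner_telescope (α : ℕ → ℝ) (a m n : ℕ) (ham : a ≤ m) (hmn : m ≤ n) :
    ∑ b ∈ Finset.Icc m n, (α (b - a + 1) - α (b - a)) = α (n + 1 - a) - α (m - a) := by
  rw [← Finset.Ico_add_one_right_eq_Icc, Finset.sum_Ico_eq_sum_range]
  calc ∑ i ∈ Finset.range (n + 1 - m), (α (m + i - a + 1) - α (m + i - a))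
      = ∑ i ∈ Finset.range (n + 1 - m), (α ((m - a) + (i + 1)) - α ((m - a) + i)) := by
        refine Finset.sum_congr rfl fun i _ => ?_
        have h1 : m + i - a = (m - a) + i := by omega
        rw [h1, add_assoc]
    _ = α ((m - a) + (n + 1 - m)) - α ((m - a) + 0) := by
        exact Finset.sum_range_sub (fun t => α ((m - a) + t)) (n + 1 - m)
    _ = α (n + 1 - a) - α (m - a) := by
        have h2 : (m - a) + (n + 1 - m) = n + 1 - a := by omega
        rw [h2, add_zero]

lemma sum_icc_split (α : ℕ → ℝ) (m n : ℕ) (hmn : m ≤ n) :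
    (∑ k ∈ Finset.Icc 1 (n - m), α k) + (∑ i ∈ Finset.range m, α ((n - m + 1) + i))
      = ∑ k ∈ Finset.Icc 1 n, α k := by
  rw [← Finset.Ico_add_one_right_eq_Icc, ← Finset.Ico_add_one_right_eq_Icc, Finset.sum_Ico_eq_sum_range,
    Finset.sum_Ico_eq_sum_range]
  have h1 : n - m + 1 - 1 = n - m := by omega
  have h2 : n + 1 - 1 = n := by omega
  rw [h1, h2]
  have : ∀ i ∈ Finset.range m, α ((n - m + 1) + i) = (fun k => α (1 + k)) ((n - m) + i) := by
    intro i _; simp only; congr 1; omega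
  rw [Finset.sum_congr rfl this, ← Finset.sum_range_add (fun k => α (1 + k)) (n - m) m]
  have h3 : n - m + m = n := by omega
  rw [h3]

lemma sum_interval_delta (α : ℕ → ℝ) (hα0 : α 0 = 0) (m n : ℕ) (h1 : 1 ≤ m) (hmn : m ≤ n) :
    ∑ p ∈ Finset.Icc 1 m ×ˢ Finset.Icc m n, (α (p.2 - p.1 + 1) - α (p.2 - p.1))
      = (∑ k ∈ Finset.Icc 1 n, α k) - (∑ k ∈ Finset.Icc 1 (m - 1), α k)
        - (∑ k ∈ Finset.Icc 1 (n - m), α k) := by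
  rw [Finset.sum_product]
  have step1 : ∀ a ∈ Finset.Icc 1 m,
      ∑ b ∈ Finset.Icc m n, (α (b - a + 1) - α (b - a)) = α (n + 1 - a) - α (m - a) := by
    intro a ha
    simp only [Finset.mem_Icc] at ha
    exact inner_telescope α a m n ha.2 hmn
  rw [Finset.sum_congr rfl step1, Finset.sum_sub_distrib]
  have e1 : ∑ a ∈ Finset.Icc 1 m, α (n + 1 - a)
      = (∑ k ∈ Finset.Icc 1 n, α k) - (∑ k ∈ Finset.Icc 1 (n - m), α k) := by
    rw [← Finset.Ico_add_one_right_eq_Icc, Finset.sum_Ico_eq_sum_range]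
    have hm : m + 1 - 1 = m := by omega
    rw [hm, ← Finset.sum_range_reflect]
    have : ∀ i ∈ Finset.range m, α (n + 1 - (1 + (m - 1 - i))) = α ((n - m + 1) + i) := by
      intro i hi; simp only [Finset.mem_range] at hi; congr 1; omega
    rw [Finset.sum_congr rfl this]
    have := sum_icc_split α m n hmn
    linarith
  have e2 : ∑ a ∈ Finset.Icc 1 m, α (m - a) = ∑ k ∈ Finset.Icc 1 (m - 1), α k := by
    rw [← Finset.Ico_add_one_right_eq_Icc, Finset.sum_Ico_eq_sum_range]
    have hm : m + 1 - 1 = m := by omega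
    rw [hm, ← Finset.sum_range_reflect]
    have h4 : ∀ i ∈ Finset.range m, α (m - (1 + (m - 1 - i))) = α i := by
      intro i hi; simp only [Finset.mem_range] at hi; congr 1; omega
    rw [Finset.sum_congr rfl h4]
    rcases Nat.exists_eq_add_of_le h1 with ⟨t, ht⟩
    have hmt : m = t + 1 := by omega
    subst hmt
    rw [Finset.sum_range_succ']
    simp only [hα0, add_zero]
    rw [← Finset.Ico_add_one_right_eq_Icc, Finset.sum_Ico_eq_sum_range]
    have h5 : t + 1 - 1 + 1 - 1 = t := by omega
    rw [h5]
    refine Finset.sum_congr rfl fun i _ => by rw [add_comm]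
  rw [e1, e2]; ring

end SumLemmas

namespace PBTree

lemma val_subtree_eq (α : ℕ → ℝ) (hα0 : α 0 = 0) (T : PBTree) :
    ∀ i, 1 ≤ i → i ≤ T.nodes →
      val α (T.subtreeAt i)
        = ∑ p ∈ (Finset.Icc 1 T.nodes ×ˢ Finset.Icc 1 T.nodes).filter
              (fun p : ℕ × ℕ => p.1 ≤ p.2 ∧ iroot T p.1 p.2 = i),
            (α (p.2 - p.1 + 1) - α (p.2 - p.1)) := by
  induction T with
  | leaf => intro i h1 h2; simp [nodes] at h2; omega
  | node l r ihl ihr =>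
    intro i h1 h2
    simp only [nodes] at h2 ⊢
    set nl := l.nodes with hnl
    set nr := r.nodes with hnr
    set n := nl + nr + 1 with hn
    rcases lt_trichotomy i (nl + 1) with hil | him | hir
    · have hsub : (node l r).subtreeAt i = l.subtreeAt i := by
        rw [subtreeAt, if_neg (by omega), if_pos (by omega)]
      rw [hsub]
      have hset : ((Finset.Icc 1 n ×ˢ Finset.Icc 1 n).filter
              (fun p : ℕ × ℕ => p.1 ≤ p.2 ∧ iroot (node l r) p.1 p.2 = i))
          = ((Finset.Icc 1 nl ×ˢ Finset.Icc 1 nl).filter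
              (fun p : ℕ × ℕ => p.1 ≤ p.2 ∧ iroot l p.1 p.2 = i)) := by
        ext p
        simp only [Finset.mem_filter, Finset.mem_product, Finset.mem_Icc]
        constructor
        · rintro ⟨⟨⟨ha1, han⟩, hb1, hbn⟩, hab, hroot⟩
          rcases iroot_cases ha1 hab (by omega) hroot with
            ⟨_, _, hm⟩ | ⟨hbl, hil', _⟩ | ⟨_, _, hgt⟩
          · omega
          · exact ⟨⟨⟨ha1, by omega⟩, hb1, hbl⟩, hab, hil'⟩
          · omega
        · rintro ⟨⟨⟨ha1, hal⟩, hb1, hbl⟩, hab, hroot⟩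
          refine ⟨⟨⟨ha1, by omega⟩, hb1, by omega⟩, hab, ?_⟩
          rw [iroot_node_left hbl]; exact hroot
      rw [hset]
      exact ihl i h1 (by omega)
    · have hsub : (node l r).subtreeAt i = node l r := by
        rw [subtreeAt, if_pos him]
      rw [hsub]
      have hset : ((Finset.Icc 1 n ×ˢ Finset.Icc 1 n).filter
              (fun p : ℕ × ℕ => p.1 ≤ p.2 ∧ iroot (node l r) p.1 p.2 = i))
          = Finset.Icc 1 (nl + 1) ×ˢ Finset.Icc (nl + 1) n := by
        ext p
        simp only [Finset.mem_filter, Finset.mem_product, Finset.mem_Icc]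
        constructor
        · rintro ⟨⟨⟨ha1, han⟩, hb1, hbn⟩, hab, hroot⟩
          rcases iroot_cases ha1 hab (by omega) hroot with
            ⟨h1', h2', hm⟩ | ⟨_, _, hlt⟩ | ⟨_, _, hgt⟩
          · exact ⟨⟨ha1, by omega⟩, by omega, hbn⟩
          · omega
          · omega
        · rintro ⟨⟨ha1, ham⟩, hmb, hbn⟩
          refine ⟨⟨⟨ha1, by omega⟩, by omega, hbn⟩, by omega, ?_⟩
          rw [iroot_node_mid ⟨ham, hmb⟩]; omega
      rw [hset]
      have := sum_interval_delta α hα0 (nl + 1) n (by omega) (by omega)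
      rw [this]
      have e1 : nl + 1 - 1 = nl := by omega
      have e2 : n - (nl + 1) = nr := by omega
      rw [e1, e2, val]
    · have hsub : (node l r).subtreeAt i = r.subtreeAt (i - (nl + 1)) := by
        rw [subtreeAt, if_neg (by omega), if_neg (by omega)]
      rw [hsub]
      rw [ihr (i - (nl + 1)) (by omega) (by omega)]
      refine (Finset.sum_nbij' (fun p : ℕ × ℕ => (p.1 - (nl + 1), p.2 - (nl + 1)))
        (fun q : ℕ × ℕ => (q.1 + (nl + 1), q.2 + (nl + 1))) ?_ ?_ ?_ ?_ ?_).symm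
      · rintro ⟨a, b⟩ hp
        simp only [Finset.mem_filter, Finset.mem_product, Finset.mem_Icc] at hp ⊢
        obtain ⟨⟨⟨ha1, han⟩, hb1, hbn⟩, hab, hroot⟩ := hp
        rcases iroot_cases ha1 hab (by omega) hroot with
          ⟨_, _, hm⟩ | ⟨_, _, hlt⟩ | ⟨ha, hr', _⟩
        · omega
        · omega
        · exact ⟨⟨⟨by omega, by omega⟩, by omega, by omega⟩, by omega, hr'⟩
      · rintro ⟨a, b⟩ hq
        simp only [Finset.mem_filter, Finset.mem_product, Finset.mem_Icc] at hq ⊢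
        obtain ⟨⟨⟨ha1, han⟩, hb1, hbn⟩, hab, hroot⟩ := hq
        refine ⟨⟨⟨by omega, by omega⟩, by omega, by omega⟩, by omega, ?_⟩
        rw [iroot_node_right (by omega) (by omega)]
        have ea : a + (nl + 1) - (nl + 1) = a := by omega
        have eb : b + (nl + 1) - (nl + 1) = b := by omega
        rw [ea, eb, hroot]
        omega
      · rintro ⟨a, b⟩ hp
        simp only [Finset.mem_filter, Finset.mem_product, Finset.mem_Icc] at hp
        obtain ⟨⟨⟨ha1, han⟩, hb1, hbn⟩, hab, hroot⟩ := hp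
        rcases iroot_cases ha1 hab (by omega) hroot with
          ⟨_, _, hm⟩ | ⟨_, _, hlt⟩ | ⟨ha, _, _⟩
        · omega
        · omega
        · simp only [Prod.mk.injEq]; omega
      · rintro ⟨a, b⟩ hq
        simp only [Prod.mk.injEq]; omega
      · rintro ⟨a, b⟩ hp
        simp only [Finset.mem_filter, Finset.mem_product, Finset.mem_Icc] at hp
        obtain ⟨⟨⟨ha1, han⟩, hb1, hbn⟩, hab, hroot⟩ := hp
        rcases iroot_cases ha1 hab (by omega) hroot with
          ⟨_, _, hm⟩ | ⟨_, _, hlt⟩ | ⟨ha, _, _⟩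
        · omega
        · omega
        · have : b - (nl + 1) - (a - (nl + 1)) = b - a := by omega
          rw [this]

end PBTree

section ConvexLemmas

open scoped Pointwise

variable {ι : Type*} {E : Type*} [AddCommGroup E] [Module ℝ E]

lemma convexHull_finsetSum (s : Finset ι) (t : ι → Set E) :
    ∑ i ∈ s, convexHull ℝ (t i) = convexHull ℝ (∑ i ∈ s, t i) := by
  induction s using Finset.cons_induction with
  | empty =>
    simp only [Finset.sum_empty]
    rw [show (0 : Set E) = {(0 : E)} from rfl, convexHull_singleton]
  | cons a s ha ih => rw [Finset.sum_cons, Finset.sum_cons, ih, convexHull_add]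

omit [Module ℝ E] in
lemma mem_finsetSum_of {s : Finset ι} {t : ι → Set E} {g : ι → E}
    (h : ∀ i ∈ s, g i ∈ t i) : ∑ i ∈ s, g i ∈ ∑ i ∈ s, t i := by
  induction s using Finset.cons_induction with
  | empty => simp only [Finset.sum_empty]; exact rfl
  | cons a s ha ih =>
    rw [Finset.sum_cons, Finset.sum_cons]
    exact Set.add_mem_add (h a (Finset.mem_cons_self a s))
      (ih fun i hi => h i (Finset.mem_cons_of_mem hi))

omit [Module ℝ E] in
lemma exists_of_mem_finsetSum {s : Finset ι} {t : ι → Set E} {x : E}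
    (h : x ∈ ∑ i ∈ s, t i) :
    ∃ g : ι → E, (∀ i ∈ s, g i ∈ t i) ∧ x = ∑ i ∈ s, g i := by
  classical
  induction s using Finset.cons_induction generalizing x with
  | empty =>
    refine ⟨fun _ => 0, by simp, ?_⟩
    simpa using h
  | cons a s ha ih =>
    rw [Finset.sum_cons] at h
    rcases Set.mem_add.mp h with ⟨y, hy, z, hz, rfl⟩
    rcases ih hz with ⟨g, hg, rfl⟩
    refine ⟨Function.update g a y, ?_, ?_⟩
    · intro i hi
      rcases Finset.mem_cons.mp hi with rfl | hi'
      · rwa [Function.update_self]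
      · rw [Function.update_of_ne (by rintro rfl; exact ha hi')]
        exact hg i hi'
    · rw [Finset.sum_cons, Function.update_self]
      congr 1
      refine (Finset.sum_congr rfl fun i hi => ?_).symm
      rw [Function.update_of_ne (by rintro rfl; exact ha hi)]

end ConvexLemmas

/-- The basis-vector index selected by the tree `T` for the interval `p`. -/
noncomputable def eIdx (d : ℕ) (T : PBTree) (p : ℕ × ℕ) : Fin (d + 1) :=
  ⟨min (PBTree.iroot T p.1 p.2 - 1) d, by omega⟩

@[simp] lemma eIdx_val (d : ℕ) (T : PBTree) (p : ℕ × ℕ) :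
    (eIdx d T p).1 = min (PBTree.iroot T p.1 p.2 - 1) d := rfl

/-- The Loday vector as an explicit sum of scaled basis vectors. -/
lemma lodayVec_eq (d : ℕ) (α : ℕ → ℝ) (hα0 : α 0 = 0) (T : PBTree) (hT : T.nodes = d + 1) :
    lodayVec (d + 1) α T
      = ∑ p ∈ (Finset.Icc 1 (d + 1) ×ˢ Finset.Icc 1 (d + 1)).filter
            (fun p : ℕ × ℕ => p.1 ≤ p.2),
          (α (p.2 - p.1 + 1) - α (p.2 - p.1)) • (Pi.single (eIdx d T p) (1 : ℝ) : Fin (d + 1) → ℝ) := by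
  classical
  funext i
  have hL := PBTree.val_subtree_eq α hα0 T (i.1 + 1) (by omega) (by rw [hT]; omega)
  rw [hT] at hL
  have hlhs : lodayVec (d + 1) α T i = PBTree.val α (T.subtreeAt (i.1 + 1)) := rfl
  rw [hlhs, hL, Finset.sum_apply]
  have hterm : ∀ p : ℕ × ℕ,
      ((α (p.2 - p.1 + 1) - α (p.2 - p.1)) • (Pi.single (eIdx d T p) (1 : ℝ) : Fin (d + 1) → ℝ)) i
      = if i = eIdx d T p then (α (p.2 - p.1 + 1) - α (p.2 - p.1)) else 0 := by
    intro p
    rw [Pi.smul_apply, Pi.single_apply, smul_eq_mul, mul_ite, mul_one, mul_zero]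
  rw [Finset.sum_congr rfl (fun p _ => hterm p), ← Finset.sum_filter, Finset.filter_filter]
  have hset : ((Finset.Icc 1 (d + 1) ×ˢ Finset.Icc 1 (d + 1)).filter
        (fun p : ℕ × ℕ => p.1 ≤ p.2 ∧ PBTree.iroot T p.1 p.2 = i.1 + 1))
      = ((Finset.Icc 1 (d + 1) ×ˢ Finset.Icc 1 (d + 1)).filter
        (fun p : ℕ × ℕ => p.1 ≤ p.2 ∧ i = eIdx d T p)) := by
    apply Finset.filter_congr
    intro p hp
    simp only [Finset.mem_product, Finset.mem_Icc] at hp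
    obtain ⟨⟨h11, h12⟩, h21, h22⟩ := hp
    constructor
    · rintro ⟨hab, hroot⟩
      have hmem := PBTree.iroot_mem T p.1 p.2 h11 hab (by rw [hT]; omega)
      refine ⟨hab, ?_⟩
      rw [Fin.ext_iff, eIdx_val]
      omega
    · rintro ⟨hab, hidx⟩
      have hmem := PBTree.iroot_mem T p.1 p.2 h11 hab (by rw [hT]; omega)
      rw [Fin.ext_iff, eIdx_val] at hidx
      have := i.isLt
      refine ⟨hab, by omega⟩
  rw [hset]

/-- Corollary 4.15: the Minkowski sum decomposition of the Loday associahedron,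
`LodAsso(α) = δ_{d+1} Δ_{[d+1]} + Σ_{I} δ_{|I|} Δ_I`, summed over all integer intervals
`∅ ≠ I ⊊ [d+1]`, where `δ_k = α_k − α_{k−1}` (with `α_0 = 0`). -/
theorem loday_minkowski (d : ℕ) (α : ℕ → ℝ) (hα0 : α 0 = 0)
    (hα : ∀ i j : ℕ, 1 ≤ i → i < j → j ≤ d + 1 → α i < α j) :
    convexHull ℝ {x : Fin (d + 1) → ℝ | ∃ T : PBTree, T.nodes = d + 1 ∧ x = lodayVec (d + 1) α T}
      = (α (d + 1) - α d) • intervalSimplex d 1 (d + 1)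
        + ∑ p ∈ (Finset.Icc 1 (d + 1) ×ˢ Finset.Icc 1 (d + 1)).filter
            (fun p : ℕ × ℕ => p.1 ≤ p.2 ∧ ¬(p.1 = 1 ∧ p.2 = d + 1)),
          (α (p.2 - p.1 + 1) - α (p.2 - p.1)) • intervalSimplex d p.1 p.2 := by
  classical
  set A : Set (Fin (d + 1) → ℝ) :=
    {x : Fin (d + 1) → ℝ | ∃ T : PBTree, T.nodes = d + 1 ∧ x = lodayVec (d + 1) α T} with hA
  set S' := (Finset.Icc 1 (d + 1) ×ˢ Finset.Icc 1 (d + 1)).filter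
      (fun p : ℕ × ℕ => p.1 ≤ p.2) with hS'
  set S := (Finset.Icc 1 (d + 1) ×ˢ Finset.Icc 1 (d + 1)).filter
      (fun p : ℕ × ℕ => p.1 ≤ p.2 ∧ ¬(p.1 = 1 ∧ p.2 = d + 1)) with hS
  set V : ℕ × ℕ → Set (Fin (d + 1) → ℝ) := fun p =>
    {x | ∃ i : Fin (d + 1), (p.1 ≤ i.1 + 1 ∧ i.1 + 1 ≤ p.2) ∧ x = Pi.single i 1} with hV
  have hn1 : ((1 : ℕ), d + 1) ∉ S := by
    rw [hS]
    intro h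
    exact (Finset.mem_filter.mp h).2.2 ⟨rfl, rfl⟩
  have hS'S : S' = insert (1, d + 1) S := by
    ext p
    rw [hS', hS]
    simp only [Finset.mem_insert, Finset.mem_filter, Finset.mem_product, Finset.mem_Icc]
    constructor
    · rintro ⟨hb, hab⟩
      by_cases h : p.1 = 1 ∧ p.2 = d + 1
      · left; exact Prod.ext h.1 h.2
      · right; exact ⟨hb, hab, h⟩
    · rintro (rfl | ⟨hb, hab, -⟩)
      · exact ⟨⟨⟨le_refl 1, by omega⟩, by omega, le_refl _⟩, by omega⟩
      · exact ⟨hb, hab⟩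
  have hsimplex : ∀ p : ℕ × ℕ, (α (p.2 - p.1 + 1) - α (p.2 - p.1)) • intervalSimplex d p.1 p.2
      = convexHull ℝ ((α (p.2 - p.1 + 1) - α (p.2 - p.1)) • V p) := by
    intro p
    rw [intervalSimplex, convexHull_smul]
  have hco : α ((1, d + 1).2 - (1, d + 1).1 + 1) - α ((1, d + 1).2 - (1, d + 1).1)
      = α (d + 1) - α d := by
    norm_num
  have hRHSeq : (α (d + 1) - α d) • intervalSimplex d 1 (d + 1)
        + ∑ p ∈ S, (α (p.2 - p.1 + 1) - α (p.2 - p.1)) • intervalSimplex d p.1 p.2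
      = convexHull ℝ (∑ p ∈ S',
          (α (p.2 - p.1 + 1) - α (p.2 - p.1)) • V p) := by
    rw [hS'S, Finset.sum_insert hn1, ← hco, ← Finset.sum_insert (f := fun p : ℕ × ℕ =>
      (α (p.2 - p.1 + 1) - α (p.2 - p.1)) • intervalSimplex d p.1 p.2) hn1]
    rw [Finset.sum_congr rfl (fun p _ => hsimplex p), convexHull_finsetSum,
      Finset.sum_insert hn1]
  rw [hRHSeq]
  apply Set.Subset.antisymm
  · apply convexHull_min ?_ (convex_convexHull ℝ _)
    rintro x ⟨T, hT, rfl⟩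
    apply subset_convexHull
    rw [lodayVec_eq d α hα0 T hT, ← hS']
    apply mem_finsetSum_of
    intro p hp
    rw [hS'] at hp
    simp only [Finset.mem_filter, Finset.mem_product, Finset.mem_Icc] at hp
    obtain ⟨⟨⟨h11, h12⟩, h21, h22⟩, hab⟩ := hp
    have hmem := PBTree.iroot_mem T p.1 p.2 h11 hab (by rw [hT]; omega)
    apply Set.smul_mem_smul_set
    refine ⟨eIdx d T p, ⟨?_, ?_⟩, rfl⟩
    · rw [show (eIdx d T p).1 = min (PBTree.iroot T p.1 p.2 - 1) d from rfl]; omega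
    · rw [show (eIdx d T p).1 = min (PBTree.iroot T p.1 p.2 - 1) d from rfl]; omega
  · apply convexHull_min ?_ (convex_convexHull ℝ _)
    intro x hx
    obtain ⟨g, hg, hxsum⟩ := exists_of_mem_finsetSum hx
    have hchoice : ∀ p : ℕ × ℕ, ∃ ip : Fin (d + 1),
        p ∈ S' → ((p.1 ≤ ip.1 + 1 ∧ ip.1 + 1 ≤ p.2) ∧
          g p = (α (p.2 - p.1 + 1) - α (p.2 - p.1)) • (Pi.single ip 1 : Fin (d + 1) → ℝ)) := by
      intro p
      by_cases hp : p ∈ S'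
      · obtain ⟨y, hy, hgy⟩ := Set.mem_smul_set.mp (hg p hp)
        obtain ⟨ip, hbound, rfl⟩ := hy
        exact ⟨ip, fun _ => ⟨hbound, hgy.symm⟩⟩
      · exact ⟨⟨0, by omega⟩, fun h => absurd h hp⟩
    choose F hF using hchoice
    by_contra hxmem
    have hAfin : A.Finite := by
      have : A = (lodayVec (d + 1) α) '' {T : PBTree | T.nodes = d + 1} := by
        ext y
        simp only [hA, Set.mem_setOf_eq, Set.mem_image]
        constructor
        · rintro ⟨T, h1, h2⟩; exact ⟨T, h1, h2.symm⟩
        · rintro ⟨T, h1, h2⟩; exact ⟨T, h1, h2.symm⟩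
      rw [this]
      exact (PBTree.finite_nodes_eq (d + 1)).image _
    obtain ⟨f, u, hfu, hux⟩ := geometric_hahn_banach_closed_point
      (convex_convexHull ℝ A) (hAfin.isClosed_convexHull ℝ) hxmem
    set w : ℕ → ℝ := fun k =>
      f (Pi.single (⟨min (k - 1) d, by omega⟩ : Fin (d + 1)) (1 : ℝ)) with hw
    set T := PBTree.gt' (d + 1) w (d + 1) with hTdef
    have hTn : T.nodes = d + 1 := PBTree.gt'_nodes (d + 1) (d + 1) le_rfl w
    have hlt : f (lodayVec (d + 1) α T) < u :=
      hfu _ (subset_convexHull ℝ A ⟨T, hTn, rfl⟩)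
    have hfin : ∀ j : Fin (d + 1), (⟨(j.1 + 1 - 1) ⊓ d, by omega⟩ : Fin (d + 1)) = j := by
      intro j
      apply Fin.ext
      simp only
      have := j.isLt
      omega
    have hwval : ∀ j : Fin (d + 1), w (j.1 + 1) = f (Pi.single j 1) :=
      fun j => congrArg (fun t : Fin (d + 1) => f (Pi.single t (1 : ℝ))) (hfin j)
    have hfv : f (lodayVec (d + 1) α T)
        = ∑ p ∈ S', (α (p.2 - p.1 + 1) - α (p.2 - p.1)) * w (PBTree.iroot T p.1 p.2) := by
      rw [lodayVec_eq d α hα0 T hTn, ← hS', map_sum]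
      refine Finset.sum_congr rfl fun p hp => ?_
      rw [hS'] at hp
      simp only [Finset.mem_filter, Finset.mem_product, Finset.mem_Icc] at hp
      obtain ⟨⟨⟨h11, h12⟩, h21, h22⟩, hab⟩ := hp
      have hmem := PBTree.iroot_mem T p.1 p.2 h11 hab (by rw [hTn]; omega)
      rw [map_smul, smul_eq_mul, ← hwval (eIdx d T p)]
      have he : (eIdx d T p).1 + 1 = PBTree.iroot T p.1 p.2 := by
        rw [eIdx_val]; omega
      rw [he]
    have hfx : f x
        = ∑ p ∈ S', (α (p.2 - p.1 + 1) - α (p.2 - p.1)) * w ((F p).1 + 1) := by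
      rw [hxsum, map_sum]
      refine Finset.sum_congr rfl fun p hp => ?_
      rw [(hF p hp).2, map_smul, smul_eq_mul, ← hwval (F p)]
    have hle : f x ≤ f (lodayVec (d + 1) α T) := by
      rw [hfx, hfv]
      apply Finset.sum_le_sum
      intro p hp
      obtain ⟨hFb, -⟩ := hF p hp
      rw [hS'] at hp
      simp only [Finset.mem_filter, Finset.mem_product, Finset.mem_Icc] at hp
      obtain ⟨⟨⟨h11, h12⟩, h21, h22⟩, hab⟩ := hp
      have hmem := PBTree.iroot_mem T p.1 p.2 h11 hab (by rw [hTn]; omega)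
      have hgr := PBTree.gt'_greedy (d + 1) (d + 1) le_rfl w p.1 p.2 h11 hab h22
        ((F p).1 + 1) hFb.1 hFb.2
      rcases eq_or_lt_of_le hab with heq | hlt2
      · have h1 : (F p).1 + 1 = p.1 := by omega
        have h2 : PBTree.iroot T p.1 p.2 = p.1 := by omega
        rw [h1, h2]
      · have hc0 : 0 ≤ α (p.2 - p.1 + 1) - α (p.2 - p.1) := by
          have := hα (p.2 - p.1) (p.2 - p.1 + 1) (by omega) (by omega) (by omega)
          linarith
        exact mul_le_mul_of_nonneg_left hgr hc0
    linarith
end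

section
/- For every n ≥ 1, the cones σ(T) := {w ∈ ℝ^n : w_i ≤ w_j whenever i ≼_T j}, as T ranges over all plane binary trees with n internal nodes, cover ℝ^n, and for distinct trees T ≠ T' the open parts σ°(T) := {w ∈ ℝ^n : w_i < w_j whenever the internal node labeled i is a child of the internal node labeled j in T} and σ°(T') are disjoint. -/
/-- The cone `σ(T) = {w ∈ ℝ^n : w_i ≤ w_j whenever i ≼_T j}` of a plane binary tree. -/
def treeCone (n : ℕ) (T : PBTree) : Set (Fin n → ℝ) :=
  {w | ∀ i j : Fin n, T.anc (i.1 + 1) (j.1 + 1) → w i ≤ w j}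

/-- The open part `σ°(T) = {w ∈ ℝ^n : w_i < w_j whenever the internal node labeled i is a
child of the internal node labeled j in T}`. -/
def treeConeOpen (n : ℕ) (T : PBTree) : Set (Fin n → ℝ) :=
  {w | ∀ i j : Fin n, T.childOf (i.1 + 1) (j.1 + 1) → w i < w j}

namespace PBTree

lemma ne_leaf_of_nodes_pos {T : PBTree} (h : 1 ≤ T.nodes) : T ≠ leaf := by
  cases T <;> simp_all [nodes]

lemma eq_leaf_of_nodes_eq_zero {T : PBTree} (h : T.nodes = 0) : T = leaf := by
  cases T <;> simp_all [nodes]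

lemma rootLabel_bounds {T : PBTree} (h : T ≠ leaf) :
    1 ≤ T.rootLabel ∧ T.rootLabel ≤ T.nodes := by
  cases T with
  | leaf => exact absurd rfl h
  | node l r => simp only [rootLabel, nodes]; omega

lemma anc_range : ∀ (T : PBTree) (i j : ℕ), T.anc i j →
    1 ≤ i ∧ i ≤ T.nodes ∧ 1 ≤ j ∧ j ≤ T.nodes := by
  intro T
  induction T with
  | leaf => intro i j h; exact h.elim
  | node l r ihl ihr =>
    intro i j h
    simp only [nodes]
    rcases h with ⟨hj, hi1, hi2⟩ | h | h
    · omega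
    · have := ihl i j h; omega
    · have := ihr _ _ h; omega

lemma childOf_range : ∀ (T : PBTree) (i j : ℕ), T.childOf i j →
    1 ≤ i ∧ i ≤ T.nodes ∧ 1 ≤ j ∧ j ≤ T.nodes := by
  intro T
  induction T with
  | leaf => intro i j h; exact h.elim
  | node l r ihl ihr =>
    intro i j h
    simp only [nodes]
    rcases h with ⟨hj, h⟩ | h | h
    · rcases h with ⟨hl, hi⟩ | ⟨hr, hi⟩
      · have := rootLabel_bounds hl; omega
      · have := rootLabel_bounds hr; omega
    · have := ihl i j h; omega
    · have := ihr _ _ h; omega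

/-- In the open cone, every non-root label has strictly smaller value than the root. -/
lemma lt_root : ∀ (T : PBTree) (w : ℕ → ℝ),
    (∀ i j, T.childOf i j → w i < w j) →
    ∀ i, 1 ≤ i → i ≤ T.nodes → i ≠ T.rootLabel → w i < w T.rootLabel := by
  intro T
  induction T with
  | leaf => intro w _ i h1 h2 _; simp only [nodes] at h2; omega
  | node l r ihl ihr =>
    intro w hw i h1 h2 hne
    simp only [nodes] at h2
    simp only [rootLabel] at hne ⊢
    by_cases hil : i ≤ l.nodes
    · have hlne : l ≠ leaf := ne_leaf_of_nodes_pos (by omega)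
      have hwl : ∀ a b, l.childOf a b → w a < w b :=
        fun a b h => hw a b (Or.inr (Or.inl h))
      by_cases hroot : i = l.rootLabel
      · exact hw i (l.nodes + 1) (Or.inl ⟨rfl, Or.inl ⟨hlne, hroot⟩⟩)
      · have h1' := ihl w hwl i h1 hil hroot
        have h2' := hw l.rootLabel (l.nodes + 1) (Or.inl ⟨rfl, Or.inl ⟨hlne, rfl⟩⟩)
        linarith
    · have hige : l.nodes + 2 ≤ i := by omega
      have hrne : r ≠ leaf := ne_leaf_of_nodes_pos (by omega)
      have hwr : ∀ a b, r.childOf a b → w (a + (l.nodes + 1)) < w (b + (l.nodes + 1)) := by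
        intro a b h
        exact hw (a + (l.nodes + 1)) (b + (l.nodes + 1))
          (Or.inr (Or.inr (by simpa using h)))
      have hkey : w (l.nodes + 1 + r.rootLabel) < w (l.nodes + 1) :=
        hw _ _ (Or.inl ⟨rfl, Or.inr ⟨hrne, rfl⟩⟩)
      by_cases hroot : i - (l.nodes + 1) = r.rootLabel
      · have hb := rootLabel_bounds hrne
        have : i = l.nodes + 1 + r.rootLabel := by omega
        rw [this]; exact hkey
      · have hb := rootLabel_bounds hrne
        have h1' := ihr (fun k => w (k + (l.nodes + 1))) hwr (i - (l.nodes + 1))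
          (by omega) (by omega) hroot
        have e1 : i - (l.nodes + 1) + (l.nodes + 1) = i := by omega
        have e2 : r.rootLabel + (l.nodes + 1) = l.nodes + 1 + r.rootLabel := by omega
        rw [e1, e2] at h1'
        linarith

/-- Two trees of equal size whose open-cone conditions are both satisfied by the same
vector are equal. -/
lemma eq_of_open : ∀ (T T' : PBTree), T.nodes = T'.nodes →
    ∀ w : ℕ → ℝ, (∀ i j, T.childOf i j → w i < w j) →
      (∀ i j, T'.childOf i j → w i < w j) → T = T' := by
  intro T
  induction T with
  | leaf =>
    intro T' h w _ _
    simp only [nodes] at h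
    exact (eq_leaf_of_nodes_eq_zero h.symm).symm
  | node l r ihl ihr =>
    intro T' hn w hw hw'
    cases T' with
    | leaf => simp [nodes] at hn
    | node l' r' =>
      simp only [nodes] at hn
      have hroot : l.nodes = l'.nodes := by
        by_contra hne
        have h1 := lt_root (node l r) w hw (l'.nodes + 1) (by omega)
          (by simp only [nodes]; omega) (by simp only [rootLabel]; omega)
        have h2 := lt_root (node l' r') w hw' (l.nodes + 1) (by omega)
          (by simp only [nodes]; omega) (by simp only [rootLabel]; omega)
        simp only [rootLabel] at h1 h2
        linarith
      have hl : l = l' := ihl l' hroot w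
        (fun i j h => hw i j (Or.inr (Or.inl h)))
        (fun i j h => hw' i j (Or.inr (Or.inl h)))
      have hr : r = r' := by
        apply ihr r' (by omega) (fun k => w (k + (l.nodes + 1)))
        · intro a b h
          exact hw _ _ (Or.inr (Or.inr (by simpa using h)))
        · intro a b h
          refine hw' _ _ (Or.inr (Or.inr ?_))
          rw [← hroot]
          simpa using h
      rw [hl, hr]

/-- For every `n` and every vector there is a tree of size `n` whose cone contains it. -/
lemma exists_cover : ∀ (n : ℕ) (w : ℕ → ℝ), ∃ T : PBTree,
    T.nodes = n ∧ ∀ i j, T.anc i j → w i ≤ w j := by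
  intro n
  induction n using Nat.strong_induction_on with
  | _ n ih =>
    intro w
    rcases Nat.eq_zero_or_pos n with h0 | hpos
    · exact ⟨leaf, h0.symm, fun i j h => h.elim⟩
    · obtain ⟨m, hm, hmax⟩ := Finset.exists_max_image (Finset.Icc 1 n) w
        ⟨1, Finset.mem_Icc.mpr ⟨le_refl 1, hpos⟩⟩
      rw [Finset.mem_Icc] at hm
      obtain ⟨L, hL, hLanc⟩ := ih (m - 1) (by omega) w
      obtain ⟨R, hR, hRanc⟩ := ih (n - m) (by omega) (fun k => w (k + m))
      refine ⟨node L R, by simp only [nodes]; omega, ?_⟩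
      intro i j hanc
      rcases hanc with ⟨hj, hi1, hi2⟩ | h | h
      · have hj' : j = m := by omega
        subst hj'
        exact hmax i (Finset.mem_Icc.mpr ⟨hi1, by omega⟩)
      · exact hLanc i j h
      · obtain ⟨ha1, ha2, ha3, ha4⟩ := anc_range R _ _ h
        have h1 : w (i - (L.nodes + 1) + m) ≤ w (j - (L.nodes + 1) + m) := hRanc _ _ h
        have e1 : i - (L.nodes + 1) + m = i := by omega
        have e2 : j - (L.nodes + 1) + m = j := by omega
        rw [e1, e2] at h1
        exact h1

end PBTree

/-- Extend a vector on `Fin n` to `ℕ` using 1-based labels. -/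
def extendVec (n : ℕ) (w : Fin n → ℝ) : ℕ → ℝ :=
  fun k => if h : k - 1 < n then w ⟨k - 1, h⟩ else 0

lemma extendVec_eval (n : ℕ) (w : Fin n → ℝ) (k : ℕ) (h1 : 1 ≤ k) (h2 : k ≤ n) :
    extendVec n w k = w ⟨k - 1, by omega⟩ := by
  unfold extendVec
  rw [dif_pos (show k - 1 < n by omega)]

lemma extendVec_fin (n : ℕ) (w : Fin n → ℝ) (i : Fin n) :
    extendVec n w (i.1 + 1) = w i := by
  rw [extendVec_eval n w (i.1 + 1) (by omega) (by omega)]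
  exact congrArg w (Fin.ext (by simp))

/-- Lemma 4.5: for every `n ≥ 1`, the cones `σ(T)`, over plane binary trees `T` with `n`
internal nodes, cover `ℝ^n`, and the open parts of distinct trees are disjoint. -/
theorem tree_cones_dissect (n : ℕ) (hn : 1 ≤ n) :
    (⋃ T ∈ {T : PBTree | T.nodes = n}, treeCone n T) = Set.univ ∧
    ∀ T T' : PBTree, T.nodes = n → T'.nodes = n → T ≠ T' →
      Disjoint (treeConeOpen n T) (treeConeOpen n T') := by
  constructor
  · apply Set.eq_univ_of_forall
    intro w
    obtain ⟨T, hT, hanc⟩ := PBTree.exists_cover n (extendVec n w)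
    refine Set.mem_biUnion (show T ∈ {T : PBTree | T.nodes = n} from hT) ?_
    intro i j h
    have h1 := hanc (i.1 + 1) (j.1 + 1) h
    rwa [extendVec_fin, extendVec_fin] at h1
  · intro T T' hT hT' hne
    rw [Set.disjoint_left]
    intro w hw hw'
    apply hne
    apply PBTree.eq_of_open T T' (by rw [hT, hT']) (extendVec n w)
    · intro i j h
      obtain ⟨hi1, hi2, hj1, hj2⟩ := PBTree.childOf_range T i j h
      rw [hT] at hi2 hj2
      rw [extendVec_eval n w i hi1 hi2, extendVec_eval n w j hj1 hj2]
      exact hw ⟨i - 1, by omega⟩ ⟨j - 1, by omega⟩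
        (by simpa [Nat.sub_add_cancel hi1, Nat.sub_add_cancel hj1] using h)
    · intro i j h
      obtain ⟨hi1, hi2, hj1, hj2⟩ := PBTree.childOf_range T' i j h
      rw [hT'] at hi2 hj2
      rw [extendVec_eval n w i hi1 hi2, extendVec_eval n w j hj1 hj2]
      exact hw' ⟨i - 1, by omega⟩ ⟨j - 1, by omega⟩
        (by simpa [Nat.sub_add_cancel hi1, Nat.sub_add_cancel hj1] using h)
end

section
/- For every d ≥ 1, the nested braid cones σ(π,τ), as (π,τ) ranges over all pairs of a permutation π of [d+1] and a permutation τ of [d], cover ℝ^{d+1} (i.e., their union is ℝ^{d+1}), and for distinct pairs (π,τ) ≠ (π',τ') the open parts σ°(π,τ) and σ°(π',τ') are disjoint. -/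
/-- `D^π_i w := w_{π⁻¹(i+1)} − w_{π⁻¹(i)}` for `i = 1,…,d` (here `i : Fin d`,
so `i.castSucc` plays the role of `i` and `i.succ` that of `i+1`). -/
def Dpi {d : ℕ} (π : Equiv.Perm (Fin (d + 1))) (i : Fin d) (w : Fin (d + 1) → ℝ) : ℝ :=
  w (π.symm i.succ) - w (π.symm i.castSucc)

/-- The nested braid cone
`σ(π,τ) = {w : 0 ≤ D^π_{τ⁻¹(1)} w ≤ D^π_{τ⁻¹(2)} w ≤ … ≤ D^π_{τ⁻¹(d)} w}`. -/
def nestedBraidCone (d : ℕ) (π : Equiv.Perm (Fin (d + 1))) (τ : Equiv.Perm (Fin d)) :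
    Set (Fin (d + 1) → ℝ) :=
  {w | (∀ i : Fin d, 0 ≤ Dpi π (τ.symm i) w) ∧ Monotone fun i => Dpi π (τ.symm i) w}

/-- The open part of `σ(π,τ)`, given by the same chain with strict inequalities. -/
def nestedBraidConeOpen (d : ℕ) (π : Equiv.Perm (Fin (d + 1))) (τ : Equiv.Perm (Fin d)) :
    Set (Fin (d + 1) → ℝ) :=
  {w | (∀ i : Fin d, 0 < Dpi π (τ.symm i) w) ∧ StrictMono fun i => Dpi π (τ.symm i) w}

/-- Two permutations giving strictly monotone re-orderings of the same function are equal. -/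
lemma perm_comp_eq_of_strictMono {n : ℕ} {f : Fin n → ℝ}
    (σ σ' : Equiv.Perm (Fin n)) (h : StrictMono (f ∘ σ.symm)) (h' : StrictMono (f ∘ σ'.symm)) :
    σ = σ' := by
  have hr : Set.range (f ∘ σ.symm) = Set.range (f ∘ σ'.symm) := by
    rw [Set.range_comp, Set.range_comp, Equiv.range_eq_univ, Equiv.range_eq_univ]
  haveI inst : WellFoundedLT (Fin n) := inferInstance
  have heq : (f ∘ ⇑σ.symm) = (f ∘ ⇑σ'.symm) :=
    (@StrictMono.range_inj (Fin n) ℝ _ _ inst _ _ h h').1 hr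
  have hfinj : Function.Injective f := fun a b hab => by
    have hab' : σ a = σ b := h.injective (by simpa using hab)
    exact σ.injective hab'
  have hs : σ.symm = σ'.symm := Equiv.ext fun i => hfinj (congrFun heq i)
  calc σ = σ.symm.symm := (Equiv.symm_symm σ).symm
    _ = σ'.symm.symm := by rw [hs]
    _ = σ' := Equiv.symm_symm σ'

/-- Lemma 5.13: for every `d ≥ 1` the nested braid cones `σ(π,τ)` cover `ℝ^{d+1}` and
their open parts are pairwise disjoint. -/
theorem nested_braid_cones_dissect (d : ℕ) (hd : 1 ≤ d) :
    (⋃ p : Equiv.Perm (Fin (d + 1)) × Equiv.Perm (Fin d),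
        nestedBraidCone d p.1 p.2) = Set.univ ∧
    ∀ p q : Equiv.Perm (Fin (d + 1)) × Equiv.Perm (Fin d), p ≠ q →
      Disjoint (nestedBraidConeOpen d p.1 p.2) (nestedBraidConeOpen d q.1 q.2) := by
  constructor
  · ext w
    simp only [Set.mem_iUnion, Set.mem_univ, iff_true]
    -- choose π sorting w
    set π : Equiv.Perm (Fin (d + 1)) := (Tuple.sort w)⁻¹ with hπ
    have hπs : π.symm = Tuple.sort w := rfl
    have hwmono : Monotone (w ∘ π.symm) := by rw [hπs]; exact Tuple.monotone_sort w
    have h0 : ∀ i : Fin d, 0 ≤ Dpi π i w := fun i =>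
      sub_nonneg.2 (hwmono (Fin.castSucc_le_succ i))
    -- choose τ sorting the differences
    set g : Fin d → ℝ := fun i => Dpi π i w with hg
    set τ : Equiv.Perm (Fin d) := (Tuple.sort g)⁻¹ with hτ
    have hτs : τ.symm = Tuple.sort g := rfl
    have hgmono : Monotone (g ∘ τ.symm) := by rw [hτs]; exact Tuple.monotone_sort g
    exact ⟨(π, τ), fun i => h0 (τ.symm i), hgmono⟩
  · rintro ⟨π, τ⟩ ⟨π', τ'⟩ hne
    rw [Set.disjoint_left]
    rintro w ⟨h1, h2⟩ ⟨h1', h2'⟩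
    apply hne
    -- strict monotonicity of w ∘ π.symm from positivity of all differences
    have key : ∀ (ρ : Equiv.Perm (Fin (d + 1))),
        (∀ i : Fin d, 0 < Dpi ρ i w) → StrictMono (w ∘ ρ.symm) := fun ρ hρ =>
      Fin.strictMono_iff_lt_succ.2 fun i => sub_pos.1 (hρ i)
    have hπ : StrictMono (w ∘ π.symm) := key π fun i => by
      have := h1 (τ i); simpa using this
    have hπ' : StrictMono (w ∘ π'.symm) := key π' fun i => by
      have := h1' (τ' i); simpa using this
    have hππ' : π = π' := perm_comp_eq_of_strictMono π π' hπ hπ'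
    subst hππ'
    have hτ : StrictMono ((fun i => Dpi π i w) ∘ τ.symm) := h2
    have hτ' : StrictMono ((fun i => Dpi π i w) ∘ τ'.symm) := h2'
    have : τ = τ' := perm_comp_eq_of_strictMono τ τ' hτ hτ'
    rw [this]
end
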